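/- arXiv:1203.3953 — 6 statements merged into one kernel-verified Lean document; each statement's English description precedes it below -/
import Mathlib

section
/- Let P be an n×n complex orthogonal projector (P = P* = P²) of rank n_e, where n = n_b·n_e for a positive integer n_b, and suppose there is c > 0 such that |P_{ij}| ≤ c/(|i−j| + 1) for all i, j. Then for every integer m with 0 ≤ m < n−1, the m-banded truncation P^(m) satisfies ‖P − P^(m)‖_F² / ‖P‖_F² < 2c²·(n_b + 1)/(m + 1). Consequently, for every ε > 0 there is an integer m̄ depending only on c, n_b and ε (not on n) such that ‖P − P^(m)‖_F/‖P‖_F ≤ ε for all m ≥ m̄. -/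
open Finset

/-- The `m`-banded truncation `A^(m)` of a square matrix `A`:
`[A^(m)]_{ij} = A_{ij}` if `|i-j| ≤ m` and `0` otherwise. -/
def bandTrunc {n : ℕ} (A : Matrix (Fin n) (Fin n) ℂ) (m : ℕ) : Matrix (Fin n) (Fin n) ℂ :=
  fun i j => if |(i : ℤ) - (j : ℤ)| ≤ (m : ℤ) then A i j else 0


lemma denom_eq {n : ℕ} (P : Matrix (Fin n) (Fin n) ℂ) (hH : P.IsHermitian)
    (hIdem : P * P = P) :
    (∑ i : Fin n, ∑ j : Fin n, ‖P i j‖ ^ 2) = (P.rank : ℝ) := by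
  classical
  set f := hH.eigenvalues with hf
  have hUU : star (hH.eigenvectorUnitary : Matrix (Fin n) (Fin n) ℂ) *
      (hH.eigenvectorUnitary : Matrix (Fin n) (Fin n) ℂ) = 1 :=
    Matrix.mem_unitaryGroup_iff'.mp (Matrix.IsHermitian.eigenvectorUnitary hH).2
  have hUU' : (hH.eigenvectorUnitary : Matrix (Fin n) (Fin n) ℂ) *
      star (hH.eigenvectorUnitary : Matrix (Fin n) (Fin n) ℂ) = 1 :=
    Matrix.mem_unitaryGroup_iff.mp (Matrix.IsHermitian.eigenvectorUnitary hH).2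
  have hD : star (hH.eigenvectorUnitary : Matrix (Fin n) (Fin n) ℂ) * P *
      (hH.eigenvectorUnitary : Matrix (Fin n) (Fin n) ℂ)
      = Matrix.diagonal (Complex.ofReal ∘ f) := by
    have h := hH.conjStarAlgAut_star_eigenvectorUnitary
    simp only [Unitary.conjStarAlgAut_apply, Unitary.coe_star, star_star] at h
    exact h
  -- eigenvalues are 0 or 1
  have heig : ∀ i, f i = 0 ∨ f i = 1 := by
    intro i
    have hsq : Matrix.diagonal (Complex.ofReal ∘ f) * Matrix.diagonal (Complex.ofReal ∘ f)
        = Matrix.diagonal (Complex.ofReal ∘ f) := by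
      rw [← hD]
      calc (star _ * P * _) * (star _ * P * _)
          = star (hH.eigenvectorUnitary : Matrix (Fin n) (Fin n) ℂ) *
            (P * ((hH.eigenvectorUnitary : Matrix (Fin n) (Fin n) ℂ) *
              star (hH.eigenvectorUnitary : Matrix (Fin n) (Fin n) ℂ)) * P) *
            (hH.eigenvectorUnitary : Matrix (Fin n) (Fin n) ℂ) := by
            noncomm_ring
        _ = _ := by rw [hUU', mul_one, hIdem]
    have h2 : ((f i : ℂ)) * (f i : ℂ) = (f i : ℂ) := by
      have := congrArg (fun M => M i i) hsq
      simpa [Matrix.mul_apply, Matrix.diagonal_apply, Finset.sum_ite_eq] using this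
    have h3 : f i * f i = f i := by exact_mod_cast h2
    rcases mul_eq_zero.mp (by nlinarith : f i * (f i - 1) = 0) with h | h
    · exact Or.inl h
    · exact Or.inr (by linarith)
  -- trace = sum of eigenvalues
  have htr : P.trace = ∑ i, (f i : ℂ) := by
    conv_lhs => rw [hH.spectral_theorem]
    rw [Unitary.conjStarAlgAut_apply, Matrix.trace_mul_cycle]
    rw [show star (hH.eigenvectorUnitary : Matrix (Fin n) (Fin n) ℂ) *
      (hH.eigenvectorUnitary : Matrix (Fin n) (Fin n) ℂ) *
      Matrix.diagonal (RCLike.ofReal ∘ hH.eigenvalues)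
      = Matrix.diagonal (RCLike.ofReal ∘ hH.eigenvalues) by rw [hUU, one_mul]]
    rw [Matrix.trace_diagonal]
    rfl
  -- LHS = (trace P).re
  have h1 : (∑ i : Fin n, ∑ j : Fin n, ‖P i j‖ ^ 2) = (P.trace).re := by
    have hconj : ∀ i j, P j i = starRingEnd ℂ (P i j) := by
      intro i j
      have := congrFun (congrFun hH.symm j) i
      simpa [Matrix.conjTranspose_apply] using this
    have h0 : P.trace = ∑ i : Fin n, ∑ j : Fin n, P i j * starRingEnd ℂ (P i j) := by
      conv_lhs => rw [← hIdem]
      simp only [Matrix.trace, Matrix.diag, Matrix.mul_apply]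
      congr 1; ext i; congr 1; ext j; rw [← hconj]
    rw [h0, Complex.re_sum]
    congr 1; ext i
    rw [Complex.re_sum]
    congr 1; ext j
    rw [Complex.mul_conj]
    simp [Complex.sq_norm]
  rw [h1, htr, Complex.re_sum]
  simp only [Complex.ofReal_re]
  rw [hH.rank_eq_card_non_zero_eigs, Fintype.card_subtype]
  rw [← Finset.sum_filter_ne_zero Finset.univ]
  rw [Finset.sum_congr rfl (fun i hi => show f i = 1 from ?_)]
  · rw [Finset.sum_const, nsmul_eq_mul, mul_one]
  · rcases heig i with h | h
    · exact absurd h (by simpa using hi)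
    · exact h


lemma auxA (m : ℕ) : ∀ n : ℕ, ∑ d ∈ Finset.range n,
    (if d ≤ m then (0:ℝ) else 1 / ((d:ℝ) + 1) ^ 2)
    ≤ 1 / ((m:ℝ) + 1) - 1 / ((max n (m+1) : ℕ) : ℝ) := by
  intro n
  induction n with
  | zero => simp
  | succ n ih =>
    rw [Finset.sum_range_succ]
    by_cases h : n ≤ m
    · have hmax' : max n (m+1) = m + 1 := by omega
      have hmax : max (n+1) (m+1) = m + 1 := by omega
      rw [hmax'] at ih
      rw [hmax]
      simpa [h] using ih
    · have hn : m + 1 ≤ n := by omega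
      have hmax : max (n+1) (m+1) = n + 1 := by omega
      have hmax' : max n (m+1) = n := by omega
      rw [hmax'] at ih
      rw [hmax, if_neg h]
      have hn0 : (0:ℝ) < n := by
        have : (1:ℝ) ≤ (n:ℝ) := by exact_mod_cast Nat.one_le_iff_ne_zero.mpr (by omega)
        linarith
      have hstep : 1 / ((n:ℝ) + 1) ^ 2 ≤ 1 / (n:ℝ) - 1 / ((n:ℝ) + 1) := by
        rw [div_sub_div _ _ (ne_of_gt hn0) (by positivity)]
        rw [div_le_div_iff₀ (by positivity) (by positivity)]
        ring_nf
        nlinarith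
      push_cast
      linarith

lemma auxA' (m n : ℕ) : ∑ d ∈ Finset.range n,
    (if d ≤ m then (0:ℝ) else 1 / ((d:ℝ) + 1) ^ 2) ≤ 1 / ((m:ℝ) + 1) := by
  have h := auxA m n
  have : (0:ℝ) ≤ 1 / ((max n (m+1) : ℕ) : ℝ) := by positivity
  linarith

lemma auxB {n : ℕ} (m : ℕ) (i : Fin n) :
    ∑ j : Fin n, (if ((i:ℤ) - (j:ℤ)).natAbs ≤ m then (0:ℝ)
      else 1 / (((((i:ℤ) - (j:ℤ)).natAbs : ℕ) : ℝ) + 1) ^ 2) ≤ 2 / ((m:ℝ) + 1) := by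
  classical
  set F : ℕ → ℝ := fun d => if d ≤ m then (0:ℝ) else 1 / ((d:ℝ) + 1) ^ 2 with hFdef
  have hF0 : ∀ d, 0 ≤ F d := by
    intro d; simp only [hFdef]; split <;> positivity
  have key : ∀ (s : Finset (Fin n)) (g : Fin n → ℕ),
      (∀ x ∈ s, ∀ y ∈ s, g x = g y → x = y) → (∀ j ∈ s, g j < n) →
      ∑ j ∈ s, F (g j) ≤ ∑ d ∈ Finset.range n, F d := by
    intro s g hinj hlt
    rw [← Finset.sum_image hinj]
    apply Finset.sum_le_sum_of_subset_of_nonneg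
    · intro d hd
      rw [Finset.mem_image] at hd
      obtain ⟨j, hj, rfl⟩ := hd
      exact Finset.mem_range.mpr (hlt j hj)
    · intros; exact hF0 _
  have hsplit : ∑ j : Fin n, F (((i:ℤ) - (j:ℤ)).natAbs)
      = ∑ j ∈ Finset.univ.filter (fun j : Fin n => (j:ℕ) ≤ (i:ℕ)), F (((i:ℤ) - (j:ℤ)).natAbs)
      + ∑ j ∈ Finset.univ.filter (fun j : Fin n => ¬ (j:ℕ) ≤ (i:ℕ)), F (((i:ℤ) - (j:ℤ)).natAbs) :=
    (Finset.sum_filter_add_sum_filter_not _ _ _).symm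
  have h1 : ∑ j ∈ Finset.univ.filter (fun j : Fin n => (j:ℕ) ≤ (i:ℕ)),
      F (((i:ℤ) - (j:ℤ)).natAbs) ≤ ∑ d ∈ Finset.range n, F d := by
    rw [Finset.sum_congr rfl (fun j hj => ?_)]
    · exact key _ (fun j : Fin n => (i:ℕ) - (j:ℕ))
        (fun x hx y hy hxy => by
          simp only [Finset.mem_filter] at hx hy
          beta_reduce at hxy
          exact Fin.ext (by omega))
        (fun j _ => by beta_reduce; omega)
    · simp only [Finset.mem_filter] at hj
      congr 1
      beta_reduce
      omega
  have h2 : ∑ j ∈ Finset.univ.filter (fun j : Fin n => ¬ (j:ℕ) ≤ (i:ℕ)),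
      F (((i:ℤ) - (j:ℤ)).natAbs) ≤ ∑ d ∈ Finset.range n, F d := by
    rw [Finset.sum_congr rfl (fun j hj => ?_)]
    · exact key _ (fun j : Fin n => (j:ℕ) - (i:ℕ))
        (fun x hx y hy hxy => by
          simp only [Finset.mem_filter] at hx hy
          beta_reduce at hxy
          exact Fin.ext (by omega))
        (fun j _ => by beta_reduce; omega)
    · simp only [Finset.mem_filter] at hj
      congr 1
      beta_reduce
      omega
  have := auxA' m n
  calc ∑ j : Fin n, F (((i:ℤ) - (j:ℤ)).natAbs)
      ≤ 2 * ∑ d ∈ Finset.range n, F d := by rw [hsplit]; linarith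
    _ ≤ 2 * (1 / ((m:ℝ) + 1)) := by linarith
    _ = 2 / ((m:ℝ) + 1) := by ring

/-- Let `P` be an `n×n` orthogonal projector of rank `n_e`, `n = n_b·n_e`, with
`|P_{ij}| ≤ c/(|i−j|+1)`. Then for `0 ≤ m < n−1` the `m`-banded truncation satisfies
`‖P − P^(m)‖_F²/‖P‖_F² < 2c²·(n_b+1)/(m+1)`, and consequently for every `ε > 0` there is
`m̄` depending only on `c`, `n_b`, `ε` (not on `n`) with `‖P − P^(m)‖_F/‖P‖_F ≤ ε` for all
`m ≥ m̄`. -/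
theorem stmt_5 (c : ℝ) (hc : 0 < c) (n_b : ℕ) (hnb : 0 < n_b) :
    (∀ (n n_e : ℕ), n = n_b * n_e →
      ∀ P : Matrix (Fin n) (Fin n) ℂ, P.IsHermitian → P * P = P → P.rank = n_e →
      (∀ i j : Fin n, ‖P i j‖ ≤ c / (|(i : ℝ) - (j : ℝ)| + 1)) →
      ∀ m : ℕ, m < n - 1 →
        (∑ i : Fin n, ∑ j : Fin n, ‖(P - bandTrunc P m) i j‖ ^ 2) /
          (∑ i : Fin n, ∑ j : Fin n, ‖P i j‖ ^ 2)
          < 2 * c ^ 2 * ((n_b : ℝ) + 1) / ((m : ℝ) + 1)) ∧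
    (∀ ε : ℝ, 0 < ε → ∃ mbar : ℕ,
      ∀ (n n_e : ℕ), n = n_b * n_e →
      ∀ P : Matrix (Fin n) (Fin n) ℂ, P.IsHermitian → P * P = P → P.rank = n_e →
      (∀ i j : Fin n, ‖P i j‖ ≤ c / (|(i : ℝ) - (j : ℝ)| + 1)) →
      ∀ m : ℕ, mbar ≤ m →
        Real.sqrt (∑ i : Fin n, ∑ j : Fin n, ‖(P - bandTrunc P m) i j‖ ^ 2) /
          Real.sqrt (∑ i : Fin n, ∑ j : Fin n, ‖P i j‖ ^ 2) ≤ ε) := by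
  classical
  have habs : ∀ {n : ℕ} (i j : Fin n),
      |(i:ℝ) - (j:ℝ)| = ((((i:ℤ) - (j:ℤ)).natAbs : ℕ) : ℝ) := by
    intro n i j
    rw [Nat.cast_natAbs]
    push_cast
    ring_nf
  -- numerator bound, valid for all n, m
  have hnum : ∀ (n : ℕ) (P : Matrix (Fin n) (Fin n) ℂ),
      (∀ i j : Fin n, ‖P i j‖ ≤ c / (|(i : ℝ) - (j : ℝ)| + 1)) →
      ∀ m : ℕ,
      (∑ i : Fin n, ∑ j : Fin n, ‖(P - bandTrunc P m) i j‖ ^ 2)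
        ≤ (n:ℝ) * (c ^ 2 * (2 / ((m:ℝ) + 1))) := by
    intro n P hbd m
    calc ∑ i : Fin n, ∑ j : Fin n, ‖(P - bandTrunc P m) i j‖ ^ 2
        ≤ ∑ i : Fin n, (c ^ 2 * (2 / ((m:ℝ) + 1))) := by
          apply Finset.sum_le_sum
          intro i _
          calc ∑ j : Fin n, ‖(P - bandTrunc P m) i j‖ ^ 2
              ≤ ∑ j : Fin n, c ^ 2 * (if ((i:ℤ) - (j:ℤ)).natAbs ≤ m then (0:ℝ)
                  else 1 / (((((i:ℤ) - (j:ℤ)).natAbs : ℕ) : ℝ) + 1) ^ 2) := by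
                apply Finset.sum_le_sum
                intro j _
                by_cases hcnd : ((i:ℤ) - (j:ℤ)).natAbs ≤ m
                · have h1 : |(i:ℤ) - (j:ℤ)| ≤ (m:ℤ) := by
                    rw [Int.abs_eq_natAbs]; exact_mod_cast hcnd
                  simp [Matrix.sub_apply, bandTrunc, h1, hcnd]
                · have h1 : ¬ |(i:ℤ) - (j:ℤ)| ≤ (m:ℤ) := by
                    rw [Int.abs_eq_natAbs]; exact_mod_cast hcnd
                  rw [if_neg hcnd]
                  simp only [Matrix.sub_apply, bandTrunc, if_neg h1, sub_zero]
                  have hb := hbd i j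
                  have hsq : ‖P i j‖ ^ 2 ≤ (c / (|(i:ℝ) - (j:ℝ)| + 1)) ^ 2 :=
                    pow_le_pow_left₀ (norm_nonneg _) hb 2
                  rw [habs i j] at hsq
                  calc ‖P i j‖ ^ 2
                      ≤ (c / (((((i:ℤ) - (j:ℤ)).natAbs : ℕ) : ℝ) + 1)) ^ 2 := hsq
                    _ = c ^ 2 * (1 / (((((i:ℤ) - (j:ℤ)).natAbs : ℕ) : ℝ) + 1) ^ 2) := by
                        rw [div_pow]; ring
            _ ≤ c ^ 2 * (2 / ((m:ℝ) + 1)) := by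
                rw [← Finset.mul_sum]
                exact mul_le_mul_of_nonneg_left (auxB m i) (sq_nonneg c)
      _ = (n:ℝ) * (c ^ 2 * (2 / ((m:ℝ) + 1))) := by
          rw [Finset.sum_const, nsmul_eq_mul, Finset.card_univ, Fintype.card_fin]
  have main : ∀ (n n_e : ℕ), n = n_b * n_e →
      ∀ P : Matrix (Fin n) (Fin n) ℂ, P.IsHermitian → P * P = P → P.rank = n_e →
      (∀ i j : Fin n, ‖P i j‖ ≤ c / (|(i : ℝ) - (j : ℝ)| + 1)) →
      ∀ m : ℕ, m < n - 1 →
        (∑ i : Fin n, ∑ j : Fin n, ‖(P - bandTrunc P m) i j‖ ^ 2) /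
          (∑ i : Fin n, ∑ j : Fin n, ‖P i j‖ ^ 2)
          < 2 * c ^ 2 * ((n_b : ℝ) + 1) / ((m : ℝ) + 1) := by
    intro n n_e hn P hH hI hrank hbd m hm
    have hn2 : 2 ≤ n := by omega
    have hne : 1 ≤ n_e := by
      rcases Nat.eq_zero_or_pos n_e with h | h
      · subst h; simp at hn; omega
      · exact h
    have hden : (∑ i : Fin n, ∑ j : Fin n, ‖P i j‖ ^ 2) = (n_e : ℝ) := by
      rw [denom_eq P hH hI, hrank]
    rw [hden]
    have hne0 : (0:ℝ) < (n_e : ℝ) := by exact_mod_cast hne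
    rw [div_lt_iff₀ hne0]
    have hN := hnum n P hbd m
    have hnr : (n:ℝ) = (n_b:ℝ) * (n_e:ℝ) := by exact_mod_cast hn
    have hm1 : (0:ℝ) < (m:ℝ) + 1 := by positivity
    have hgap : (n_b:ℝ) * (n_e:ℝ) * (c ^ 2 * (2 / ((m:ℝ) + 1)))
        < 2 * c ^ 2 * ((n_b:ℝ) + 1) / ((m:ℝ) + 1) * (n_e:ℝ) := by
      have heq : 2 * c ^ 2 * ((n_b:ℝ) + 1) / ((m:ℝ) + 1) * (n_e:ℝ)
          - (n_b:ℝ) * (n_e:ℝ) * (c ^ 2 * (2 / ((m:ℝ) + 1)))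
          = 2 * c ^ 2 * (n_e:ℝ) / ((m:ℝ) + 1) := by
        field_simp
        ring
      have hpos : (0:ℝ) < 2 * c ^ 2 * (n_e:ℝ) / ((m:ℝ) + 1) := by positivity
      linarith
    rw [hnr] at hN
    linarith
  refine ⟨main, ?_⟩
  intro ε hε
  set X := 2 * c ^ 2 * ((n_b:ℝ) + 1) with hX
  have hXpos : 0 < X := by positivity
  refine ⟨Nat.ceil (X / ε ^ 2), ?_⟩
  intro n n_e hn P hH hI hrank hbd m hm
  by_cases hcase : m < n - 1
  · have h1 := main n n_e hn P hH hI hrank hbd m hcase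
    have hn2 : 2 ≤ n := by omega
    have hne : 1 ≤ n_e := by
      rcases Nat.eq_zero_or_pos n_e with h | h
      · subst h; simp at hn; omega
      · exact h
    have hden : (∑ i : Fin n, ∑ j : Fin n, ‖P i j‖ ^ 2) = (n_e : ℝ) := by
      rw [denom_eq P hH hI, hrank]
    have hnum0 : 0 ≤ ∑ i : Fin n, ∑ j : Fin n, ‖(P - bandTrunc P m) i j‖ ^ 2 := by
      positivity
    rw [← Real.sqrt_div hnum0]
    have hmb : (X / ε ^ 2 : ℝ) ≤ (Nat.ceil (X / ε ^ 2) : ℝ) := Nat.le_ceil _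
    have hm1 : (Nat.ceil (X / ε ^ 2) : ℝ) ≤ (m:ℝ) + 1 := by
      have : (Nat.ceil (X / ε ^ 2) : ℝ) ≤ (m:ℝ) := by exact_mod_cast hm
      linarith
    have hXle : X / ((m:ℝ) + 1) ≤ ε ^ 2 := by
      rw [div_le_iff₀ (by positivity)]
      rw [div_le_iff₀ (by positivity : (0:ℝ) < ε ^ 2)] at hmb
      calc X ≤ (Nat.ceil (X / ε ^ 2) : ℝ) * ε ^ 2 := hmb
        _ ≤ ((m:ℝ) + 1) * ε ^ 2 := by
            exact mul_le_mul_of_nonneg_right hm1 (by positivity)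
        _ = ε ^ 2 * ((m:ℝ) + 1) := by ring
    have hlt : (∑ i : Fin n, ∑ j : Fin n, ‖(P - bandTrunc P m) i j‖ ^ 2) /
        (∑ i : Fin n, ∑ j : Fin n, ‖P i j‖ ^ 2) ≤ ε ^ 2 := le_trans h1.le hXle
    calc Real.sqrt ((∑ i : Fin n, ∑ j : Fin n, ‖(P - bandTrunc P m) i j‖ ^ 2) /
          (∑ i : Fin n, ∑ j : Fin n, ‖P i j‖ ^ 2))
        ≤ Real.sqrt (ε ^ 2) := Real.sqrt_le_sqrt hlt
      _ = ε := by rw [Real.sqrt_sq hε.le]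
  · -- band covers everything
    have hzero : P - bandTrunc P m = 0 := by
      ext i j
      have hcond : |(i:ℤ) - (j:ℤ)| ≤ (m:ℤ) := by
        rw [abs_le]
        have hi := i.isLt
        have hj := j.isLt
        omega
      simp [Matrix.sub_apply, bandTrunc, hcond]
    have hz : (∑ i : Fin n, ∑ j : Fin n, ‖(P - bandTrunc P m) i j‖ ^ 2) = 0 := by
      rw [hzero]; simp
    rw [hz, Real.sqrt_zero, zero_div]
    exact hε.le
end

section
/- Let P be an n×n complex orthogonal projector (P = P* = P²) of rank n_e, where n = n_b·n_e for a positive integer n_b, and suppose |P_{ij}| ≤ c·e^{−α|i−j|} for all i, j, with c > 0 and α > 0. Then for every integer m ≥ 0 the m-banded truncation P^(m) satisfies ‖P − P^(m)‖_F² / ‖P‖_F² ≤ k₀·e^{−2αm}, with k₀ = 2c²·n_b/(1 − e^{−2α}); in particular k₀ depends only on c, α and n_b, and not on n or m. -/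
open Finset

lemma fiber_card_le_two (n : ℕ) (i : Fin n) (d : ℕ) :
    #{j : Fin n | (((i:ℤ) - (j:ℤ)).natAbs = d)} ≤ 2 := by
  classical
  set A : Finset (Fin n) := univ.filter (fun j => (j:ℤ) = (i:ℤ) - d) with hA
  set B : Finset (Fin n) := univ.filter (fun j => (j:ℤ) = (i:ℤ) + d) with hB
  have hsub : ({j : Fin n | (((i:ℤ) - (j:ℤ)).natAbs = d)} : Finset (Fin n)) ⊆ A ∪ B := by
    intro j hj
    simp only [mem_filter, mem_univ, true_and] at hj
    have h := Int.natAbs_eq ((i:ℤ) - (j:ℤ))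
    rw [hj] at h
    simp only [mem_union, hA, hB, mem_filter, mem_univ, true_and]
    omega
  have hcard1 : ∀ (z : ℤ), #(univ.filter (fun j : Fin n => (j:ℤ) = z)) ≤ 1 := by
    intro z
    apply card_le_one.mpr
    intro a ha b hb
    simp only [mem_filter, mem_univ, true_and] at ha hb
    have : (a:ℤ) = (b:ℤ) := ha.trans hb.symm
    exact Fin.ext (by exact_mod_cast this)
  calc _ ≤ _ := card_le_card hsub
    _ ≤ #A + #B := card_union_le _ _
    _ ≤ 1 + 1 := add_le_add (hcard1 _) (hcard1 _)

lemma geom_tail (m N : ℕ) (q : ℝ) (hq0 : 0 < q) (hq1 : q < 1) :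
    ∑ d ∈ Ico (m+1) N, q ^ d ≤ q^(m+1) / (1-q) := by
  rcases le_or_gt N (m+1) with h | h
  · rw [Ico_eq_empty (by omega)]
    simp
    exact div_nonneg (by positivity) (by linarith)
  rw [Finset.sum_Ico_eq_sum_range]
  have : ∀ k, q ^ (m+1+k) = q^(m+1) * q^k := fun k => pow_add q _ _
  simp_rw [this, ← Finset.mul_sum]
  rw [div_eq_mul_inv]
  apply mul_le_mul_of_nonneg_left _ (by positivity)
  calc ∑ k ∈ range (N - (m+1)), q ^ k ≤ ∑' k : ℕ, q ^ k :=
        Summable.sum_le_tsum _ (fun k _ => by positivity) (summable_geometric_of_lt_one hq0.le hq1)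
    _ = (1-q)⁻¹ := tsum_geometric_of_lt_one hq0.le hq1

lemma inner_bound (n m : ℕ) (q : ℝ) (hq0 : 0 < q) (hq1 : q < 1) (i : Fin n) :
    ∑ j ∈ univ.filter (fun j : Fin n => ¬ |(i:ℤ) - (j:ℤ)| ≤ (m:ℤ)),
      q ^ (((i:ℤ) - (j:ℤ)).natAbs) ≤ 2 * (q^(m+1) / (1-q)) := by
  classical
  set s := univ.filter (fun j : Fin n => ¬ |(i:ℤ) - (j:ℤ)| ≤ (m:ℤ)) with hs
  have hcomp : ∑ j ∈ s, q ^ (((i:ℤ) - (j:ℤ)).natAbs) =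
      ∑ d ∈ s.image (fun j : Fin n => ((i:ℤ) - (j:ℤ)).natAbs),
        #(s.filter (fun a : Fin n => ((i:ℤ) - (a:ℤ)).natAbs = d)) • q ^ d :=
    Finset.sum_comp (fun d : ℕ => q ^ d) (fun j : Fin n => ((i:ℤ) - (j:ℤ)).natAbs)
  rw [hcomp]
  have h1 : ∀ d ∈ s.image (fun j : Fin n => ((i:ℤ) - (j:ℤ)).natAbs),
      #(s.filter (fun a : Fin n => ((i:ℤ) - (a:ℤ)).natAbs = d)) • q ^ d ≤ 2 * q ^ d := by
    intro d _
    rw [nsmul_eq_mul]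
    apply mul_le_mul_of_nonneg_right _ (by positivity)
    have hle : #(s.filter (fun a : Fin n => ((i:ℤ) - (a:ℤ)).natAbs = d)) ≤
        #(univ.filter (fun a : Fin n => ((i:ℤ) - (a:ℤ)).natAbs = d)) :=
      card_le_card (filter_subset_filter _ (hs ▸ filter_subset _ _))
    exact_mod_cast hle.trans (fiber_card_le_two n i d)
  calc _ ≤ ∑ d ∈ s.image (fun j : Fin n => ((i:ℤ) - (j:ℤ)).natAbs), 2 * q ^ d := sum_le_sum h1
    _ ≤ ∑ d ∈ Ico (m+1) n, 2 * q ^ d := by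
        apply sum_le_sum_of_subset_of_nonneg
        · intro d hd
          simp only [mem_image, hs, mem_filter, mem_univ, true_and] at hd
          obtain ⟨j, hj, rfl⟩ := hd
          have hi := i.isLt
          have hjn := j.isLt
          rw [not_le] at hj
          rw [Int.abs_eq_natAbs] at hj
          simp only [mem_Ico]
          omega
        · intro d _ _
          positivity
    _ = 2 * ∑ d ∈ Ico (m+1) n, q ^ d := by rw [Finset.mul_sum]
    _ ≤ 2 * (q^(m+1) / (1-q)) := by
        have := geom_tail m n q hq0 hq1
        linarith

lemma trace_eq_rank (n : ℕ) (P : Matrix (Fin n) (Fin n) ℂ) (hP2 : P * P = P) :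
    Matrix.trace P = (P.rank : ℂ) := by
  have hf : P.mulVecLin ∘ₗ P.mulVecLin = P.mulVecLin := by
    rw [← Matrix.mulVecLin_mul, hP2]
  have hproj : LinearMap.IsProj (LinearMap.range P.mulVecLin) P.mulVecLin :=
    ⟨fun x => LinearMap.mem_range_self _ x, fun x hx => by
      obtain ⟨y, rfl⟩ := hx
      exact congrFun (congrArg DFunLike.coe hf) y⟩
  have h := hproj.trace
  rw [LinearMap.trace_eq_matrix_trace ℂ (Pi.basisFun ℂ (Fin n)),
    LinearMap.toMatrix_eq_toMatrix', ← Matrix.toLin'_apply', LinearMap.toMatrix'_toLin'] at h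
  rw [h, Matrix.rank, Matrix.toLin'_apply']

open Matrix in
lemma frob_eq_trace_re (n : ℕ) (P : Matrix (Fin n) (Fin n) ℂ) (hP : P.IsHermitian)
    (hP2 : P * P = P) :
    (∑ i : Fin n, ∑ j : Fin n, ‖P i j‖ ^ 2) = (Matrix.trace P).re := by
  have h1 : Matrix.trace P = Matrix.trace (P * Pᴴ) := by rw [hP.eq, hP2]
  rw [h1, Matrix.trace, Complex.re_sum]
  refine Finset.sum_congr rfl fun i _ => ?_
  rw [Matrix.diag_apply, Matrix.mul_apply, Complex.re_sum]
  refine Finset.sum_congr rfl fun j _ => ?_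
  rw [Matrix.conjTranspose_apply, Complex.sq_norm, Complex.normSq_apply]
  simp [Complex.mul_re, Matrix.star_apply, Complex.conj_re, Complex.conj_im]

/-- Let `P` be an `n×n` orthogonal projector of rank `n_e`, `n = n_b·n_e`, with
`|P_{ij}| ≤ c·e^{−α|i−j|}`. Then for every `m ≥ 0` the `m`-banded truncation satisfies
`‖P − P^(m)‖_F²/‖P‖_F² ≤ k₀·e^{−2αm}` with `k₀ = 2c²·n_b/(1 − e^{−2α})`, a constant
depending only on `c`, `α` and `n_b` (not on `n` or `m`). -/
theorem stmt_6 (n_b n_e n : ℕ) (hnb : 0 < n_b) (hn : n = n_b * n_e)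
    (c α : ℝ) (hc : 0 < c) (hα : 0 < α)
    (P : Matrix (Fin n) (Fin n) ℂ) (hP : P.IsHermitian) (hP2 : P * P = P)
    (hrank : P.rank = n_e)
    (hdecay : ∀ i j : Fin n,
      ‖P i j‖ ≤ c * Real.exp (-α * |(i : ℝ) - (j : ℝ)|)) :
    ∀ m : ℕ,
      (∑ i : Fin n, ∑ j : Fin n, ‖(P - bandTrunc P m) i j‖ ^ 2) /
        (∑ i : Fin n, ∑ j : Fin n, ‖P i j‖ ^ 2)
        ≤ (2 * c ^ 2 * (n_b : ℝ) / (1 - Real.exp (-2 * α))) * Real.exp (-2 * α * (m : ℝ)) := by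
  intro m
  classical
  set q : ℝ := Real.exp (-2 * α) with hqdef
  have hq0 : 0 < q := Real.exp_pos _
  have hq1 : q < 1 := Real.exp_lt_one_iff.mpr (by linarith)
  have h1q : 0 < 1 - q := by linarith
  have hqm : Real.exp (-2 * α * (m : ℝ)) = q ^ m := by
    rw [show (-2 * α * (m : ℝ)) = (m : ℝ) * (-2 * α) by ring, Real.exp_nat_mul]
  have hRHSnn : 0 ≤ (2 * c ^ 2 * (n_b : ℝ) / (1 - Real.exp (-2 * α))) *
      Real.exp (-2 * α * (m : ℝ)) := by
    apply mul_nonneg (div_nonneg (by positivity) (by linarith)) (Real.exp_pos _).le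
  -- denominator
  have hden : (∑ i : Fin n, ∑ j : Fin n, ‖P i j‖ ^ 2) = (n_e : ℝ) := by
    rw [frob_eq_trace_re n P hP hP2, trace_eq_rank n P hP2, hrank]
    simp
  -- pointwise bound
  have hpt : ∀ i j : Fin n, ‖(P - bandTrunc P m) i j‖ ^ 2 ≤
      (if |(i : ℤ) - (j : ℤ)| ≤ (m : ℤ) then 0
        else c ^ 2 * q ^ (((i:ℤ) - (j:ℤ)).natAbs)) := by
    intro i j
    by_cases hij : |(i : ℤ) - (j : ℤ)| ≤ (m : ℤ)
    · simp [Matrix.sub_apply, bandTrunc, hij]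
    · rw [if_neg hij]
      have hPij : (P - bandTrunc P m) i j = P i j := by
        simp [Matrix.sub_apply, bandTrunc, hij]
      rw [hPij]
      have habs : |(i : ℝ) - (j : ℝ)| = ((((i:ℤ) - (j:ℤ)).natAbs : ℕ) : ℝ) := by
        rw [show ((i : ℝ) - (j : ℝ)) = (((i:ℤ) - (j:ℤ) : ℤ) : ℝ) by push_cast; ring,
          ← Int.cast_abs, Int.abs_eq_natAbs]
        exact Int.cast_natCast _
      have h2 : ‖P i j‖ ^ 2 ≤
          (c * Real.exp (-α * |(i : ℝ) - (j : ℝ)|)) ^ 2 :=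
        pow_le_pow_left₀ (norm_nonneg _) (hdecay i j) 2
      refine h2.trans_eq ?_
      rw [mul_pow, habs]
      congr 1
      rw [hqdef, ← Real.exp_nat_mul, ← Real.exp_nat_mul]
      congr 1
      push_cast
      ring
  -- numerator bound
  have hnum : (∑ i : Fin n, ∑ j : Fin n, ‖(P - bandTrunc P m) i j‖ ^ 2)
      ≤ (n : ℝ) * (c ^ 2 * (2 * (q ^ (m+1) / (1 - q)))) := by
    calc (∑ i : Fin n, ∑ j : Fin n, ‖(P - bandTrunc P m) i j‖ ^ 2)
        ≤ ∑ i : Fin n, ∑ j : Fin n,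
            (if |(i : ℤ) - (j : ℤ)| ≤ (m : ℤ) then 0
              else c ^ 2 * q ^ (((i:ℤ) - (j:ℤ)).natAbs)) :=
          Finset.sum_le_sum fun i _ => Finset.sum_le_sum fun j _ => hpt i j
      _ ≤ ∑ _i : Fin n, c ^ 2 * (2 * (q ^ (m+1) / (1 - q))) := by
          apply Finset.sum_le_sum
          intro i _
          have heq : (∑ j : Fin n, (if |(i : ℤ) - (j : ℤ)| ≤ (m : ℤ) then 0
              else c ^ 2 * q ^ (((i:ℤ) - (j:ℤ)).natAbs)))
              = ∑ j ∈ univ.filter (fun j : Fin n => ¬ |(i:ℤ) - (j:ℤ)| ≤ (m:ℤ)),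
                  c ^ 2 * q ^ (((i:ℤ) - (j:ℤ)).natAbs) := by
            rw [Finset.sum_filter]
            refine Finset.sum_congr rfl fun j _ => ?_
            by_cases hij : |(i : ℤ) - (j : ℤ)| ≤ (m : ℤ) <;> simp [hij]
          rw [heq, ← Finset.mul_sum]
          exact mul_le_mul_of_nonneg_left (inner_bound n m q hq0 hq1 i) (by positivity)
      _ = (n : ℝ) * (c ^ 2 * (2 * (q ^ (m+1) / (1 - q)))) := by
          rw [Finset.sum_const, Finset.card_univ, Fintype.card_fin, nsmul_eq_mul]
  rcases Nat.eq_zero_or_pos n_e with he | he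
  · have hn0 : n = 0 := by rw [hn, he, Nat.mul_zero]
    subst hn0
    simp only [Finset.univ_eq_empty, Finset.sum_empty, zero_div]
    exact hRHSnn
  · rw [hden, div_le_iff₀ (by exact_mod_cast he : (0:ℝ) < (n_e:ℝ))]
    have hncast : (n : ℝ) = (n_b : ℝ) * (n_e : ℝ) := by rw [hn]; push_cast; ring
    calc (∑ i : Fin n, ∑ j : Fin n, ‖(P - bandTrunc P m) i j‖ ^ 2)
        ≤ (n : ℝ) * (c ^ 2 * (2 * (q ^ (m+1) / (1 - q)))) := hnum
      _ = (2 * c ^ 2 * (n_b : ℝ) * (n_e : ℝ) / (1 - q)) * q ^ (m+1) := by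
          rw [hncast]; ring
      _ ≤ (2 * c ^ 2 * (n_b : ℝ) * (n_e : ℝ) / (1 - q)) * q ^ m := by
          apply mul_le_mul_of_nonneg_left
            (pow_le_pow_of_le_one hq0.le hq1.le (Nat.le_succ m))
            (div_nonneg (by positivity) h1q.le)
      _ = (2 * c ^ 2 * (n_b : ℝ) / (1 - Real.exp (-2 * α))) *
            Real.exp (-2 * α * (m : ℝ)) * (n_e : ℝ) := by
          rw [hqm, ← hqdef]; ring
end

section
/- Let 0 < a < b and I = [−b,−a] ∪ [a,b]. Let f be continuous on I such that the restriction of f to [−b,−a] is the restriction of a function f₁ analytic on the open left half-plane {Re z < 0}, and the restriction of f to [a,b] is the restriction of a function f₂ analytic on the open right half-plane {Re z > 0}. Then for every ξ with 1 < ξ < ξ̄ := (a+b)/(b−a), there exists a constant C > 0, independent of k, such that E_k(f,I) ≤ C·ξ^{−k/2} for all integers k ≥ 0. -/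
/-- The best polynomial approximation error `E_k(f,S)`: the infimum over real polynomials `p`
of degree at most `k` of `max_{x ∈ S} |f(x) − p(x)|`. -/
noncomputable def bestApproxError (f : ℝ → ℝ) (S : Set ℝ) (k : ℕ) : ℝ :=
  sInf {e : ℝ | ∃ p : Polynomial ℝ, p.natDegree ≤ k ∧
    e = sSup ((fun x => |f x - p.eval x|) '' S)}

open Complex Metric Set Polynomial intervalIntegral
set_option maxHeartbeats 1000000

lemma bApprox_le {f : ℝ → ℝ} {S : Set ℝ} {k : ℕ} (hS : S.Nonempty)
    (p : Polynomial ℝ) (hp : p.natDegree ≤ k) {ε : ℝ}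
    (hε : ∀ x ∈ S, |f x - p.eval x| ≤ ε) :
    bestApproxError f S k ≤ ε := by
  obtain ⟨x₀, hx₀⟩ := hS
  rw [bestApproxError]
  have hbdd : BddBelow {e : ℝ | ∃ p : Polynomial ℝ, p.natDegree ≤ k ∧
      e = sSup ((fun x => |f x - p.eval x|) '' S)} := by
    refine ⟨0, fun e he => ?_⟩
    obtain ⟨q, -, rfl⟩ := he
    by_cases hb : BddAbove ((fun x => |f x - q.eval x|) '' S)
    · exact le_trans (abs_nonneg _) (le_csSup hb ⟨x₀, hx₀, rfl⟩)
    · rw [Real.sSup_of_not_bddAbove hb]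
  refine le_trans (csInf_le hbdd ⟨p, hp, rfl⟩) ?_
  refine Real.sSup_le (fun y hy => ?_) (le_trans (abs_nonneg _) (hε x₀ hx₀))
  obtain ⟨x, hx, rfl⟩ := hy
  exact hε x hx

lemma circleIntegral_inv_circle {r : ℝ} (hr : 0 < r) (h : ℂ → ℂ) :
    (∮ ζ in C(0, r⁻¹), h ζ) = ∮ η in C(0, r), (η⁻¹)^2 * h η⁻¹ := by
  have harg : ∀ θ : ℝ, (circleMap 0 r θ)⁻¹ = circleMap 0 r⁻¹ (-θ) := by
    intro θ
    simp only [circleMap, zero_add, mul_inv, ← Complex.exp_neg]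
    push_cast
    ring_nf
  have hper : Function.Periodic (fun θ => deriv (circleMap 0 r⁻¹) θ • h (circleMap 0 r⁻¹ θ)) (2 * Real.pi) := by
    have := (periodic_circleMap 0 r⁻¹).comp (fun z : ℂ => (z * I) * h z)
    intro θ
    simpa [deriv_circleMap, smul_eq_mul] using this θ
  have hint : ∀ θ : ℝ, deriv (circleMap 0 r) θ • ((circleMap 0 r θ)⁻¹ ^ 2 * h (circleMap 0 r θ)⁻¹)
      = deriv (circleMap 0 r⁻¹) (-θ) • h (circleMap 0 r⁻¹ (-θ)) := by
    intro θ
    simp only [deriv_circleMap, smul_eq_mul, ← harg θ]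
    have h1 : circleMap 0 r θ ≠ 0 := circleMap_ne_center hr.ne'
    field_simp
  have e1 : (∮ η in C(0, r), (η⁻¹)^2 * h η⁻¹)
      = ∫ θ in (0:ℝ)..2 * Real.pi, deriv (circleMap 0 r⁻¹) (-θ) • h (circleMap 0 r⁻¹ (-θ)) := by
    rw [circleIntegral]
    exact intervalIntegral.integral_congr fun θ _ => hint θ
  have e2 : (∫ θ in (0:ℝ)..2 * Real.pi, deriv (circleMap 0 r⁻¹) (-θ) • h (circleMap 0 r⁻¹ (-θ)))
      = ∫ θ in -(2*Real.pi)..(0:ℝ), deriv (circleMap 0 r⁻¹) θ • h (circleMap 0 r⁻¹ θ) := by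
    simpa using intervalIntegral.integral_comp_neg (a := 0) (b := 2*Real.pi)
      (f := fun θ => deriv (circleMap 0 r⁻¹) θ • h (circleMap 0 r⁻¹ θ))
  have e3 : (∫ θ in -(2*Real.pi)..(0:ℝ), deriv (circleMap 0 r⁻¹) θ • h (circleMap 0 r⁻¹ θ))
      = ∫ θ in (0:ℝ)..2 * Real.pi, deriv (circleMap 0 r⁻¹) θ • h (circleMap 0 r⁻¹ θ) := by
    have := hper.intervalIntegral_add_eq (-(2*Real.pi)) 0
    norm_num at this ⊢
    convert this using 2 <;> ring
  rw [e1, e2, e3]; rfl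

lemma laurent_identity {ρ : ℝ} (hρ : 1 < ρ) {G : ℂ → ℂ}
    (hGsym : ∀ w : ℂ, w ≠ 0 → G w⁻¹ = G w)
    (hGc : ContinuousOn G (closedBall 0 ρ \ ball 0 ρ⁻¹))
    (hGd : ∀ z ∈ ball (0:ℂ) ρ \ closedBall 0 ρ⁻¹, DifferentiableAt ℂ G z)
    {w : ℂ} (hw : ‖w‖ = 1) :
    (2 * Real.pi * I : ℂ) * G w =
      (∮ ζ in C(0, ρ), (ζ - w)⁻¹ * G ζ) + (∮ ζ in C(0, ρ), (ζ - w⁻¹)⁻¹ * G ζ)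
        - (∮ ζ in C(0, ρ), (ζ - 0)⁻¹ * G ζ) := by
  have hρ0 : 0 < ρ := lt_trans one_pos hρ
  have hρinv : ρ⁻¹ < 1 := inv_lt_one_of_one_lt₀ hρ
  have hρinv0 : 0 < ρ⁻¹ := inv_pos.mpr hρ0
  have hw0 : w ≠ 0 := by
    intro h; rw [h] at hw; simp at hw
  have hwn : ‖w‖ = 1 := hw
  have hwmem : w ∈ ball (0:ℂ) ρ \ closedBall 0 ρ⁻¹ := by
    rw [mem_diff, mem_ball_zero_iff, mem_closedBall_zero_iff, hwn]
    exact ⟨hρ, not_le.mpr hρinv⟩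
  have hsphρ : sphere (0:ℂ) ρ ⊆ closedBall 0 ρ \ ball 0 ρ⁻¹ := by
    intro z hz
    rw [mem_sphere_zero_iff_norm] at hz
    rw [mem_diff, mem_closedBall_zero_iff, mem_ball_zero_iff, hz]
    exact ⟨le_rfl, not_lt.mpr (hρinv.le.trans hρ.le)⟩
  have hsphρinv : sphere (0:ℂ) ρ⁻¹ ⊆ closedBall 0 ρ \ ball 0 ρ⁻¹ := by
    intro z hz
    rw [mem_sphere_zero_iff_norm] at hz
    rw [mem_diff, mem_closedBall_zero_iff, mem_ball_zero_iff, hz]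
    exact ⟨hρinv.le.trans hρ.le, not_lt.mpr le_rfl⟩
  have hGcρ : ContinuousOn G (sphere (0:ℂ) ρ) := hGc.mono hsphρ
  -- nonvanishing facts on the sphere of radius ρ
  have hηw : ∀ {η : ℂ}, η ∈ sphere (0:ℂ) ρ → η - w ≠ 0 := by
    intro η hη h
    rw [mem_sphere_zero_iff_norm] at hη
    rw [sub_eq_zero] at h
    rw [h, hwn] at hη; exact hρ.ne hη
  have hηwi : ∀ {η : ℂ}, η ∈ sphere (0:ℂ) ρ → η - w⁻¹ ≠ 0 := by
    intro η hη h
    rw [mem_sphere_zero_iff_norm] at hη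
    rw [sub_eq_zero] at h
    rw [h, norm_inv, hwn] at hη; simp at hη; exact hρ.ne' hη.symm
  have hη0 : ∀ {η : ℂ}, η ∈ sphere (0:ℂ) ρ → η ≠ 0 := by
    intro η hη h
    rw [mem_sphere_zero_iff_norm, h] at hη; simp at hη; exact hρ0.ne' hη.symm
  -- circle integrability
  have hci : ∀ u : ℂ, (∀ {η : ℂ}, η ∈ sphere (0:ℂ) ρ → η - u ≠ 0) →
      CircleIntegrable (fun ζ => (ζ - u)⁻¹ * G ζ) 0 ρ := by
    intro u hu
    apply ContinuousOn.circleIntegrable hρ0.le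
    exact (((continuousOn_id.sub continuousOn_const).inv₀ (fun η hη => hu hη)).mul hGcρ)
  have hci1 := hci w (fun {η} hη => hηw hη)
  have hci2 := hci w⁻¹ (fun {η} hη => hηwi hη)
  have hci3 : CircleIntegrable (fun ζ => ζ⁻¹ * G ζ) 0 ρ := by
    apply ContinuousOn.circleIntegrable hρ0.le
    exact ((continuousOn_id.inv₀ (fun η hη => hη0 hη)).mul hGcρ)
  -- Step 1 : annulus Cauchy for the dslope of G at w
  have hds : (∮ ζ in C(0, ρ), dslope G w ζ) = ∮ ζ in C(0, ρ⁻¹), dslope G w ζ := by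
    apply circleIntegral_eq_of_differentiable_on_annulus_off_countable hρinv0
      (hρinv.le.trans hρ.le) (Set.countable_singleton w)
    · -- continuity of dslope on the closed annulus
      intro z hz
      rcases eq_or_ne z w with rfl | hzw
      · exact ((continuousAt_dslope_same).mpr (hGd z hwmem)).continuousWithinAt
      · have : ∀ᶠ ζ in nhdsWithin z (closedBall 0 ρ \ ball 0 ρ⁻¹),
            dslope G w ζ = (ζ - w)⁻¹ • (G ζ - G w) := by
          filter_upwards [eventually_nhdsWithin_of_eventually_nhds
            (eventually_ne_nhds hzw)] with ζ hζ
          rw [dslope_of_ne _ hζ, slope_def_module]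
        refine ContinuousWithinAt.congr_of_eventuallyEq ?_ this
          (by rw [dslope_of_ne _ hzw, slope_def_module])
        exact (((continuousWithinAt_id.sub continuousWithinAt_const).inv₀
          (sub_ne_zero.mpr hzw)).smul
          (((hGc z hz).sub continuousWithinAt_const)))
    · intro z hz
      have hzw : z ≠ w := fun h => hz.2 (h ▸ rfl)
      have : ∀ᶠ ζ in nhds z, (fun ζ => (ζ - w)⁻¹ • (G ζ - G w)) ζ = dslope G w ζ := by
        filter_upwards [eventually_ne_nhds hzw] with ζ hζ
        rw [dslope_of_ne _ hζ, slope_def_module]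
      exact (Filter.EventuallyEq.differentiableAt_iff this).mp
        (((differentiableAt_id.sub_const w).inv
          (sub_ne_zero.mpr hzw)).smul ((hGd z hz.1).sub_const (G w)))
  -- Step 2 : expand the outer integral of the dslope
  have hciw : CircleIntegrable (fun ζ => (ζ - w)⁻¹ * G w) 0 ρ := by
    apply ContinuousOn.circleIntegrable hρ0.le
    exact ((continuousOn_id.sub continuousOn_const).inv₀ (fun η hη => hηw hη)).mul
      continuousOn_const
  have e_left : (∮ ζ in C(0, ρ), dslope G w ζ)
      = (∮ ζ in C(0, ρ), (ζ - w)⁻¹ * G ζ) - G w * (2 * Real.pi * I) := by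
    have h1 : (∮ ζ in C(0, ρ), dslope G w ζ)
        = ∮ ζ in C(0, ρ), ((ζ - w)⁻¹ * G ζ - (ζ - w)⁻¹ * G w) := by
      apply circleIntegral.integral_congr hρ0.le
      intro ζ hζ
      have : ζ ≠ w := fun h => hηw hζ (sub_eq_zero.mpr h)
      rw [dslope_of_ne _ this, slope_def_module, smul_eq_mul, mul_sub]
    rw [h1, circleIntegral.integral_sub hci1 hciw]
    congr 1
    have := circleIntegral.integral_smul_const (fun ζ => (ζ - w)⁻¹) (G w) 0 ρ
    simp only [smul_eq_mul] at this
    rw [this, circleIntegral.integral_sub_inv_of_mem_ball (by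
      rw [mem_ball_zero_iff, hwn]; exact hρ), mul_comm]
  -- Step 3 : expand the inner integral of the dslope
  have hsphρinvw : ∀ {ζ : ℂ}, ζ ∈ sphere (0:ℂ) ρ⁻¹ → ζ - w ≠ 0 := by
    intro ζ hζ h
    rw [mem_sphere_zero_iff_norm] at hζ
    rw [sub_eq_zero] at h
    rw [h, hwn] at hζ
    exact hρinv.ne hζ.symm
  have hGcρinv : ContinuousOn G (sphere (0:ℂ) ρ⁻¹) := hGc.mono hsphρinv
  have hciw1 : CircleIntegrable (fun ζ => (ζ - w)⁻¹ * G ζ) 0 ρ⁻¹ := by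
    apply ContinuousOn.circleIntegrable hρinv0.le
    exact (((continuousOn_id.sub continuousOn_const).inv₀
      (fun η hη => hsphρinvw hη)).mul hGcρinv)
  have hciw2 : CircleIntegrable (fun ζ => (ζ - w)⁻¹ * G w) 0 ρ⁻¹ := by
    apply ContinuousOn.circleIntegrable hρinv0.le
    exact ((continuousOn_id.sub continuousOn_const).inv₀
      (fun η hη => hsphρinvw hη)).mul continuousOn_const
  have hzero : (∮ ζ in C(0, ρ⁻¹), (ζ - w)⁻¹) = 0 := by
    apply circleIntegral_eq_zero_of_differentiable_on_off_countable hρinv0.le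
      Set.countable_empty
    · apply ContinuousOn.inv₀ (continuousOn_id.sub continuousOn_const)
      intro ζ hζ h
      rw [mem_closedBall_zero_iff] at hζ
      rw [Pi.sub_apply, sub_eq_zero] at h
      simp only [id_eq] at h
      rw [h, hwn] at hζ
      exact absurd (hζ.trans_lt hρinv) (lt_irrefl 1)
    · intro z hz
      have : z - w ≠ 0 := by
        intro h
        rw [mem_diff, mem_ball_zero_iff] at hz
        rw [sub_eq_zero] at h
        rw [h, hwn] at hz
        exact absurd (hz.1.trans hρinv) (lt_irrefl 1)
      exact (differentiableAt_id.sub_const w).inv this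
  have e_right : (∮ ζ in C(0, ρ⁻¹), dslope G w ζ)
      = ∮ ζ in C(0, ρ⁻¹), (ζ - w)⁻¹ * G ζ := by
    have h1 : (∮ ζ in C(0, ρ⁻¹), dslope G w ζ)
        = ∮ ζ in C(0, ρ⁻¹), ((ζ - w)⁻¹ * G ζ - (ζ - w)⁻¹ * G w) := by
      apply circleIntegral.integral_congr hρinv0.le
      intro ζ hζ
      have : ζ ≠ w := fun h => hsphρinvw hζ (sub_eq_zero.mpr h)
      rw [dslope_of_ne _ this, slope_def_module, smul_eq_mul, mul_sub]
    rw [h1, circleIntegral.integral_sub hciw1 hciw2]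
    have := circleIntegral.integral_smul_const (fun ζ => (ζ - w)⁻¹) (G w) 0 ρ⁻¹
    simp only [smul_eq_mul] at this
    rw [this, hzero, zero_mul, sub_zero]
  -- Step 4 : inversion of the inner integral
  have e_inv : (∮ ζ in C(0, ρ⁻¹), (ζ - w)⁻¹ * G ζ)
      = (∮ ζ in C(0, ρ), ζ⁻¹ * G ζ) - ∮ ζ in C(0, ρ), (ζ - w⁻¹)⁻¹ * G ζ := by
    rw [circleIntegral_inv_circle hρ0 (fun ζ => (ζ - w)⁻¹ * G ζ)]
    have h1 : (∮ η in C(0, ρ), (η⁻¹)^2 * ((η⁻¹ - w)⁻¹ * G η⁻¹))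
        = ∮ η in C(0, ρ), (η⁻¹ * G η - (η - w⁻¹)⁻¹ * G η) := by
      apply circleIntegral.integral_congr hρ0.le
      intro η hη
      have hη0' : η ≠ 0 := hη0 hη
      have hηwi' : η - w⁻¹ ≠ 0 := hηwi hη
      show η⁻¹^2 * ((η⁻¹ - w)⁻¹ * G η⁻¹) = η⁻¹ * G η - (η - w⁻¹)⁻¹ * G η
      have hηiw : η⁻¹ - w ≠ 0 := by
        intro h
        rw [sub_eq_zero] at h
        have : ‖η⁻¹‖ = 1 := by rw [h, hwn]
        rw [norm_inv, mem_sphere_zero_iff_norm.mp hη] at this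
        rw [← this] at hρinv
        exact lt_irrefl _ hρinv
      rw [hGsym η hη0', ← sub_mul, ← mul_assoc]
      congr 1
      have e1 : η - w⁻¹ = (η * w - 1) * w⁻¹ := by field_simp
      have e2 : η⁻¹ - w = -(η * w - 1) * η⁻¹ := by field_simp; ring
      have e3 : η * w - 1 ≠ 0 := by
        intro h
        apply hηwi'
        rw [e1, h, zero_mul]
      have e4 : (1:ℂ) - η * w ≠ 0 := fun h => e3 (by linear_combination -h)
      rw [e1, e2]
      field_simp
      ring
    rw [h1]
    exact circleIntegral.integral_sub hci3 hci2
  -- Step 5 : combine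
  have key := hds
  rw [e_left, e_right, e_inv] at key
  have hgoal : (∮ ζ in C(0, ρ), (ζ - 0)⁻¹ * G ζ) = ∮ ζ in C(0, ρ), ζ⁻¹ * G ζ := by
    simp only [sub_zero]
  rw [hgoal]
  linear_combination -key

lemma chebyshev_natDegree_le (n : ℕ) : (Polynomial.Chebyshev.T ℝ (n:ℤ)).natDegree ≤ n := by
  induction n using Nat.strong_induction_on with
  | _ n ih =>
    match n with
    | 0 => simp [Polynomial.Chebyshev.T_zero]
    | 1 => simp [Polynomial.Chebyshev.T_one, Polynomial.natDegree_X_le]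
    | (m+2) =>
      have h := Polynomial.Chebyshev.T_add_two ℝ (m:ℤ)
      have : ((m:ℤ) + 2) = ((m+2 : ℕ) : ℤ) := by push_cast; ring
      rw [this] at h
      rw [h]
      refine le_trans (Polynomial.natDegree_sub_le _ _) ?_
      have h1 : (2 * Polynomial.X * Polynomial.Chebyshev.T ℝ ((m:ℤ)+1)).natDegree ≤ m + 2 := by
        refine le_trans (Polynomial.natDegree_mul_le) ?_
        have : ((m:ℤ) + 1) = ((m+1 : ℕ) : ℤ) := by push_cast; ring
        rw [this]
        have h2 := ih (m+1) (by omega)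
        have h3 : (2 * Polynomial.X : Polynomial ℝ).natDegree ≤ 1 := by
          refine le_trans (Polynomial.natDegree_mul_le) ?_
          simp [Polynomial.natDegree_X_le]
        omega
      have h2 : (Polynomial.Chebyshev.T ℝ (m:ℤ)).natDegree ≤ m := ih m (by omega)
      exact max_le (le_trans h1 le_rfl) (by omega)

lemma core {c s ρ : ℝ} (hs : 0 < s) (hρ : 1 < ρ) {φ : ℂ → ℂ}
    (hφ : ∀ z : ℂ, 0 < z.re → DifferentiableAt ℂ φ z)
    (hK : ∀ w : ℂ, ρ⁻¹ ≤ ‖w‖ → ‖w‖ ≤ ρ →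
      0 < ((c:ℂ) + (s:ℂ) * (w + w⁻¹) / 2).re) :
    ∃ M : ℝ, 0 ≤ M ∧ ∀ N : ℕ, ∃ p : Polynomial ℝ, p.natDegree ≤ N ∧
      ∀ x ∈ Set.Icc (c - s) (c + s), |(φ ((x:ℝ):ℂ)).re - p.eval x| ≤ M * (ρ⁻¹) ^ N := by
  have hρ0 : 0 < ρ := one_pos.trans hρ
  have hρi1 : ρ⁻¹ < 1 := inv_lt_one_of_one_lt₀ hρ
  have hρi0 : 0 < ρ⁻¹ := inv_pos.mpr hρ0
  set J : ℂ → ℂ := fun w => (c:ℂ) + (s:ℂ) * (w + w⁻¹) / 2 with hJdef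
  set G : ℂ → ℂ := fun w => φ (J w) with hGdef
  have hGdiff : ∀ z : ℂ, ρ⁻¹ ≤ ‖z‖ → ‖z‖ ≤ ρ → DifferentiableAt ℂ G z := by
    intro z h1 h2
    have hz0 : z ≠ 0 := by
      intro h
      rw [h] at h1; simp at h1
      exact absurd h1 (not_le.mpr hρ0)
    have hJd : DifferentiableAt ℂ J z := by
      apply (differentiableAt_const _).add
      exact (((differentiableAt_id.add (differentiableAt_inv hz0)).const_mul _)).div_const _
    exact (hφ _ (hK z h1 h2)).comp z hJd
  have hGsym : ∀ w : ℂ, w ≠ 0 → G w⁻¹ = G w := by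
    intro w hw
    have : J w⁻¹ = J w := by simp only [hJdef, inv_inv]; ring
    simp only [hGdef, this]
  have memd : ∀ z : ℂ, z ∈ closedBall (0:ℂ) ρ \ ball 0 ρ⁻¹ →
      ρ⁻¹ ≤ ‖z‖ ∧ ‖z‖ ≤ ρ := by
    intro z hz
    rw [mem_diff, mem_closedBall_zero_iff, mem_ball_zero_iff, not_lt] at hz
    exact ⟨hz.2, hz.1⟩
  have hGc : ContinuousOn G (closedBall 0 ρ \ ball 0 ρ⁻¹) := by
    intro z hz
    exact (hGdiff z (memd z hz).1 (memd z hz).2).continuousAt.continuousWithinAt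
  have hGd : ∀ z ∈ ball (0:ℂ) ρ \ closedBall 0 ρ⁻¹, DifferentiableAt ℂ G z := by
    intro z hz
    rw [mem_diff, mem_ball_zero_iff, mem_closedBall_zero_iff, not_le] at hz
    exact hGdiff z hz.2.le hz.1.le
  have hci : CircleIntegrable G 0 ρ := by
    apply ContinuousOn.circleIntegrable hρ0.le
    intro z hz
    rw [mem_sphere_zero_iff_norm] at hz
    have : ‖z‖ = ρ := hz
    exact (hGdiff z (by rw [this]; exact hρi1.le.trans hρ.le) (by rw [this])).continuousAt.continuousWithinAt
  set coef : ℕ → ℂ := fun n => cauchyPowerSeries G 0 ρ n (fun _ => 1) with hcoefdef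
  set M₀ : ℝ := (2 * Real.pi)⁻¹ * ∫ θ in (0:ℝ)..2*Real.pi, ‖G (circleMap 0 ρ θ)‖ with hM₀def
  have hM₀0 : 0 ≤ M₀ := by
    apply mul_nonneg (by positivity)
    apply intervalIntegral.integral_nonneg Real.two_pi_pos.le
    intro u _; exact norm_nonneg _
  have hcoef_bound : ∀ n, ‖coef n‖ ≤ M₀ * (ρ⁻¹)^n := by
    intro n
    have h1 := norm_cauchyPowerSeries_le G 0 ρ n
    rw [abs_of_pos hρ0] at h1
    have h2 : ‖coef n‖ ≤ ‖cauchyPowerSeries G 0 ρ n‖ := by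
      have h3 := (cauchyPowerSeries G 0 ρ n).le_opNorm (fun _ => (1:ℂ))
      simp only [norm_one, Finset.prod_const_one, mul_one] at h3
      exact h3
    calc ‖coef n‖ ≤ ‖cauchyPowerSeries G 0 ρ n‖ := h2
      _ ≤ M₀ * ρ⁻¹ ^ n := h1
  have tn_eq : ∀ (u : ℂ) (n : ℕ), (cauchyPowerSeries G 0 ρ n fun _ => u) = u^n * coef n := by
    intro u n
    simp only [hcoefdef]
    rw [cauchyPowerSeries_apply, cauchyPowerSeries_apply]
    have e : ∀ ζ : ℂ, (u/(ζ - 0))^n • (ζ - 0)⁻¹ • G ζ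
        = u^n • (((1:ℂ)/(ζ - 0))^n • (ζ - 0)⁻¹ • G ζ) := by
      intro ζ
      simp only [smul_eq_mul, div_pow, one_pow]
      ring
    rw [show (fun ζ : ℂ => (u/(ζ - 0))^n • (ζ - 0)⁻¹ • G ζ)
        = (fun ζ : ℂ => u^n • (((1:ℂ)/(ζ - 0))^n • (ζ - 0)⁻¹ • G ζ)) from funext e]
    rw [circleIntegral.integral_smul]
    simp only [smul_eq_mul]
    ring
  have hasum : ∀ u : ℂ, ‖u‖ < ρ → HasSum (fun n => u^n * coef n)
      ((2 * Real.pi * I : ℂ)⁻¹ • ∮ ζ in C(0,ρ), (ζ - u)⁻¹ • G ζ) := by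
    intro u hu
    have h1 := hasSum_cauchyPowerSeries_integral hci hu
    simp only [tn_eq, zero_add] at h1
    exact h1
  set M₁ : ℝ := M₀ * (1 - ρ⁻¹)⁻¹ * ρ⁻¹ with hM₁def
  have hM₁0 : 0 ≤ M₁ := by
    apply mul_nonneg (mul_nonneg hM₀0 _) hρi0.le
    rw [inv_nonneg]; linarith
  have tail : ∀ (u : ℂ), ‖u‖ = 1 → ∀ N : ℕ,
      ‖((2 * Real.pi * I : ℂ)⁻¹ • ∮ ζ in C(0,ρ), (ζ - u)⁻¹ • G ζ)
          - ∑ n ∈ Finset.range (N+1), u^n * coef n‖ ≤ M₁ * (ρ⁻¹)^N := by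
    intro u hu N
    have h1 := hasum u (by rw [hu]; exact hρ)
    have h2 : HasSum (fun n => u^(n+(N+1)) * coef (n+(N+1)))
        (((2 * Real.pi * I : ℂ)⁻¹ • ∮ ζ in C(0,ρ), (ζ - u)⁻¹ • G ζ)
          - ∑ n ∈ Finset.range (N+1), u^n * coef n) := by
      refine (hasSum_nat_add_iff (f := fun n => u ^ n * coef n) (N + 1)).mpr ?_
      rwa [sub_add_cancel]
    have hb : ∀ n : ℕ, ‖u^(n+(N+1)) * coef (n+(N+1))‖ ≤ (M₀ * (ρ⁻¹)^(N+1)) * (ρ⁻¹)^n := by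
      intro n
      rw [norm_mul, norm_pow]
      have : ‖u‖ = 1 := hu
      rw [this, one_pow, one_mul]
      calc ‖coef (n+(N+1))‖ ≤ M₀ * (ρ⁻¹)^(n+(N+1)) := hcoef_bound _
        _ = (M₀ * (ρ⁻¹)^(N+1)) * (ρ⁻¹)^n := by rw [pow_add]; ring
    have hsg : Summable (fun n : ℕ => (M₀ * (ρ⁻¹)^(N+1)) * (ρ⁻¹)^n) :=
      (summable_geometric_of_lt_one hρi0.le hρi1).mul_left _
    have hsn : Summable (fun n : ℕ => ‖u^(n+(N+1)) * coef (n+(N+1))‖) :=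
      Summable.of_nonneg_of_le (fun n => norm_nonneg _) hb hsg
    calc ‖((2 * Real.pi * I : ℂ)⁻¹ • ∮ ζ in C(0,ρ), (ζ - u)⁻¹ • G ζ)
          - ∑ n ∈ Finset.range (N+1), u^n * coef n‖
        = ‖∑' n : ℕ, u^(n+(N+1)) * coef (n+(N+1))‖ := by rw [h2.tsum_eq]
      _ ≤ ∑' n : ℕ, ‖u^(n+(N+1)) * coef (n+(N+1))‖ := norm_tsum_le_tsum_norm hsn
      _ ≤ ∑' n : ℕ, (M₀ * (ρ⁻¹)^(N+1)) * (ρ⁻¹)^n := Summable.tsum_le_tsum hb hsn hsg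
      _ = (M₀ * (ρ⁻¹)^(N+1)) * (1 - ρ⁻¹)⁻¹ := by
          rw [tsum_mul_left, tsum_geometric_of_lt_one hρi0.le hρi1]
      _ = M₁ * (ρ⁻¹)^N := by rw [hM₁def, pow_succ]; ring
  refine ⟨2 * M₁, by positivity, fun N => ?_⟩
  -- the polynomial
  set q : Polynomial ℝ := Polynomial.C s⁻¹ * (Polynomial.X - Polynomial.C c) with hqdef
  have hqdeg : q.natDegree ≤ 1 := by
    refine le_trans (Polynomial.natDegree_mul_le) ?_
    simp [Polynomial.natDegree_X_sub_C]
  set p : Polynomial ℝ := (∑ n ∈ Finset.range (N+1),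
      Polynomial.C (2 * (coef n).re) * ((Polynomial.Chebyshev.T ℝ (n:ℤ)).comp q))
      - Polynomial.C ((coef 0).re) with hpdef
  have hpdeg : p.natDegree ≤ N := by
    refine le_trans (Polynomial.natDegree_sub_le _ _) (max_le ?_ (by simp))
    refine Polynomial.natDegree_sum_le_of_forall_le _ _ (fun n hn => ?_)
    refine le_trans (Polynomial.natDegree_mul_le) ?_
    rw [Polynomial.natDegree_C, zero_add]
    refine le_trans (Polynomial.natDegree_comp_le) ?_
    have h1 := chebyshev_natDegree_le n
    have hn' : n ≤ N := Nat.lt_succ_iff.mp (Finset.mem_range.mp hn)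
    calc (Polynomial.Chebyshev.T ℝ (n:ℤ)).natDegree * q.natDegree ≤ n * 1 :=
          Nat.mul_le_mul h1 hqdeg
      _ ≤ N := by omega
  refine ⟨p, hpdeg, fun x hx => ?_⟩
  obtain ⟨hx1, hx2⟩ := hx
  have hxc1 : -1 ≤ (x - c)/s := by rw [le_div_iff₀ hs]; linarith
  have hxc2 : (x - c)/s ≤ 1 := by rw [div_le_iff₀ hs]; linarith
  set θ : ℝ := Real.arccos ((x - c)/s) with hθdef
  have hcosθ : Real.cos θ = (x - c)/s := Real.cos_arccos hxc1 hxc2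
  set w : ℂ := Complex.exp (θ * I) with hwdef
  have hw1 : ‖w‖ = 1 := Complex.norm_exp_ofReal_mul_I θ
  have hwinv : w⁻¹ = Complex.exp (-(θ * I)) := by rw [← Complex.exp_neg]
  have hwsum : w + w⁻¹ = 2 * ((Real.cos θ : ℝ) : ℂ) := by
    rw [hwdef, hwinv, Complex.ofReal_cos]
    rw [show (-(↑θ * I) : ℂ) = (-θ:ℂ) * I by ring]
    exact (Complex.two_cos _).symm
  have hJw : J w = ((x:ℝ):ℂ) := by
    simp only [hJdef]
    rw [hwsum, hcosθ]
    have hs0 : (s:ℂ) ≠ 0 := by exact_mod_cast hs.ne'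
    push_cast
    field_simp
    ring
  have hlaurent := laurent_identity hρ hGsym hGc hGd hw1
  have hA1 := hasum w (by rw [hw1]; exact hρ)
  have habswinv : ‖w⁻¹‖ = 1 := by rw [norm_inv, hw1]; norm_num
  have hA2 := hasum w⁻¹ (by rw [habswinv]; exact hρ)
  have hA0 := hasum 0 (by rw [norm_zero]; exact hρ0)
  have hA0' : ((2 * Real.pi * I : ℂ)⁻¹ • ∮ ζ in C(0,ρ), (ζ - (0:ℂ))⁻¹ • G ζ) = coef 0 := by
    have h0 : HasSum (fun n : ℕ => (0:ℂ)^n * coef n) (coef 0) := by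
      have := hasSum_single (f := fun n : ℕ => (0:ℂ)^n * coef n) 0
        (by intro b hb; simp [zero_pow hb])
      simpa using this
    exact hA0.unique h0
  have h2πI : (2 * Real.pi * I : ℂ) ≠ 0 := by
    simp [Real.pi_ne_zero, Complex.I_ne_zero]
  have hGw : G w = ((2 * Real.pi * I : ℂ)⁻¹ • ∮ ζ in C(0,ρ), (ζ - w)⁻¹ • G ζ)
      + ((2 * Real.pi * I : ℂ)⁻¹ • ∮ ζ in C(0,ρ), (ζ - w⁻¹)⁻¹ • G ζ) - coef 0 := by
    rw [← hA0']
    simp only [smul_eq_mul]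
    apply mul_left_cancel₀ h2πI
    rw [hlaurent]
    field_simp
  have t1 := tail w hw1 N
  have t2 := tail w⁻¹ habswinv N
  set S : ℂ := (∑ n ∈ Finset.range (N+1), (w^n + (w⁻¹)^n) * coef n) - coef 0 with hSdef
  have hsplit : S = ((∑ n ∈ Finset.range (N+1), w^n * coef n)
      + (∑ n ∈ Finset.range (N+1), (w⁻¹)^n * coef n)) - coef 0 := by
    rw [hSdef, ← Finset.sum_add_distrib]
    congr 1
    apply Finset.sum_congr rfl
    intros; ring
  have hGwx : φ ((x:ℝ):ℂ) = G w := by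
    simp only [hGdef, hJw]
  have hdiff : ‖φ ((x:ℝ):ℂ) - S‖ ≤ 2 * M₁ * (ρ⁻¹)^N := by
    have key : φ ((x:ℝ):ℂ) - S
        = (((2 * Real.pi * I : ℂ)⁻¹ • ∮ ζ in C(0,ρ), (ζ - w)⁻¹ • G ζ)
            - ∑ n ∈ Finset.range (N+1), w^n * coef n)
          + (((2 * Real.pi * I : ℂ)⁻¹ • ∮ ζ in C(0,ρ), (ζ - w⁻¹)⁻¹ • G ζ)
            - ∑ n ∈ Finset.range (N+1), (w⁻¹)^n * coef n) := by
      rw [hGwx, hGw, hsplit]; ring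
    rw [key]
    calc ‖_ + _‖ ≤ M₁ * (ρ⁻¹)^N + M₁ * (ρ⁻¹)^N := le_trans (norm_add_le _ _) (add_le_add t1 t2)
      _ = 2 * M₁ * (ρ⁻¹)^N := by ring
  have hwn : ∀ n : ℕ, w^n + (w⁻¹)^n = ((2 * Real.cos (n * θ) : ℝ) : ℂ) := by
    intro n
    rw [hwdef, hwinv, ← Complex.exp_nat_mul, ← Complex.exp_nat_mul]
    push_cast
    rw [show ((n:ℂ)) * (-((θ:ℂ) * I)) = (-((n:ℂ) * (θ:ℂ))) * I by ring,
      show ((n:ℂ)) * ((θ:ℂ) * I) = ((n:ℂ) * (θ:ℂ)) * I by ring]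
    exact (Complex.two_cos _).symm
  have heval : Polynomial.eval x p = S.re := by
    rw [hpdef, hSdef]
    rw [Polynomial.eval_sub, Polynomial.eval_finset_sum]
    rw [Complex.sub_re, Complex.re_sum]
    congr 1
    · apply Finset.sum_congr rfl
      intro n hn
      rw [hwn n, Complex.re_ofReal_mul]
      rw [Polynomial.eval_mul, Polynomial.eval_C, Polynomial.eval_comp]
      have hq : Polynomial.eval x q = Real.cos θ := by
        rw [hqdef]
        simp only [Polynomial.eval_mul, Polynomial.eval_C, Polynomial.eval_sub,
          Polynomial.eval_X]
        rw [hcosθ, div_eq_inv_mul]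
      rw [hq]
      rw [Polynomial.Chebyshev.T_real_cos θ (n:ℤ)]
      push_cast
      ring
    · simp
  have hre : |(φ ((x:ℝ):ℂ)).re - Polynomial.eval x p| ≤ ‖φ ((x:ℝ):ℂ) - S‖ := by
    rw [heval]
    rw [show (φ ((x:ℝ):ℂ)).re - S.re = (φ ((x:ℝ):ℂ) - S).re from (Complex.sub_re _ _).symm]
    exact Complex.abs_re_le_norm _
  linarith [hdiff, hre]



/-- Chui–Hasson-type bound: let `0 < a < b`, `I = [−b,−a] ∪ [a,b]`, and let `f` be
continuous on `I`, equal on `[−b,−a]` to the restriction of a function `f₁` analytic on the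
open left half-plane and equal on `[a,b]` to the restriction of a function `f₂` analytic on
the open right half-plane. Then for every `1 < ξ < ξ̄ = (a+b)/(b−a)` there is `C > 0`,
independent of `k`, with `E_k(f,I) ≤ C·ξ^{−k/2}` for all `k ≥ 0`. -/
theorem stmt_12 (a b : ℝ) (ha : 0 < a) (hab : a < b)
    (f : ℝ → ℝ)
    (hf : ContinuousOn f (Set.Icc (-b) (-a) ∪ Set.Icc a b))
    (f₁ f₂ : ℂ → ℂ)
    (hf₁ : AnalyticOnNhd ℂ f₁ {z : ℂ | z.re < 0})
    (hf₂ : AnalyticOnNhd ℂ f₂ {z : ℂ | 0 < z.re})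
    (hf₁f : ∀ x ∈ Set.Icc (-b) (-a), f₁ ((x : ℝ) : ℂ) = ((f x : ℝ) : ℂ))
    (hf₂f : ∀ x ∈ Set.Icc a b, f₂ ((x : ℝ) : ℂ) = ((f x : ℝ) : ℂ))
    (ξ : ℝ) (hξ1 : 1 < ξ) (hξ2 : ξ < (a + b) / (b - a)) :
    ∃ C : ℝ, 0 < C ∧ ∀ k : ℕ,
      bestApproxError f (Set.Icc (-b) (-a) ∪ Set.Icc a b) k ≤ C * ξ ^ (-(k : ℝ) / 2) := by
  classical
  set Iset := Set.Icc (-b) (-a) ∪ Set.Icc a b with hIset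
  have hb : 0 < b := ha.trans hab
  have hba : 0 < b - a := by linarith
  have hXgt1 : 1 < (a + b) / (b - a) := by rw [lt_div_iff₀ hba]; linarith
  set X : ℝ := (a + b) / (b - a) with hXdef
  set ρ : ℝ := (ξ + X) / 2 with hρdef
  have hρ1 : 1 < ρ := by rw [hρdef]; linarith
  have hξρ : ξ < ρ := by rw [hρdef]; linarith
  have hρX : ρ < X := by rw [hρdef]; linarith
  have hρ0 : 0 < ρ := one_pos.trans hρ1
  set c : ℝ := (a^2 + b^2) / 2 with hcdef
  set s : ℝ := (b^2 - a^2) / 2 with hsdef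
  have hs : 0 < s := by rw [hsdef]; nlinarith
  have hcs1 : c - s = a^2 := by rw [hcdef, hsdef]; ring
  have hcs2 : c + s = b^2 := by rw [hcdef, hsdef]; ring
  -- complex square root
  set csqrt : ℂ → ℂ := fun z => z ^ ((1:ℂ)/2) with hcsqrtdef
  have hsq_diff : ∀ z : ℂ, 0 < z.re → DifferentiableAt ℂ csqrt z := by
    intro z hz
    exact HasDerivAt.differentiableAt (HasStrictDerivAt.hasDerivAt (Complex.hasStrictDerivAt_cpow_const (c := (1:ℂ)/2) (Or.inl hz)))
  have hsq_re : ∀ z : ℂ, 0 < z.re → 0 < (csqrt z).re := by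
    intro z hz
    have hz0 : z ≠ 0 := by
      intro h; rw [h] at hz; simp at hz
    have harg : |Complex.arg z| < Real.pi / 2 :=
      Complex.abs_arg_lt_pi_div_two_iff.mpr (Or.inl hz)
    have : csqrt z = Complex.exp (Complex.log z * ((1:ℂ)/2)) := by
      rw [hcsqrtdef]
      exact Complex.cpow_def_of_ne_zero hz0 _
    rw [this, Complex.exp_re]
    have him : (Complex.log z * ((1:ℂ)/2)).im = Complex.arg z / 2 := by
      simp [Complex.mul_im, Complex.log_im]
      ring
    rw [him]
    apply mul_pos (Real.exp_pos _)
    apply Real.cos_pos_of_mem_Ioo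
    constructor
    · rw [abs_lt] at harg; linarith [Real.pi_pos]
    · rw [abs_lt] at harg; linarith [Real.pi_pos]
  have hsq_real : ∀ y : ℝ, 0 ≤ y → csqrt ((y:ℝ):ℂ) = ((Real.sqrt y : ℝ):ℂ) := by
    intro y hy
    rw [hcsqrtdef]
    show ((y:ℂ)) ^ ((1:ℂ)/2) = _
    rw [show ((1:ℂ)/2) = (((1/2 : ℝ)):ℂ) by norm_num]
    rw [← Complex.ofReal_cpow hy]
    rw [Real.sqrt_eq_rpow]
  -- even and odd analytic parts
  set gg : ℂ → ℂ := fun y => (f₂ (csqrt y) + f₁ (-(csqrt y))) / 2 with hggdef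
  set hh : ℂ → ℂ := fun y => ((f₂ (csqrt y) - f₁ (-(csqrt y))) / 2) / (csqrt y) with hhhdef
  have hsq_ne : ∀ z : ℂ, 0 < z.re → csqrt z ≠ 0 := by
    intro z hz h0
    have := hsq_re z hz
    rw [h0] at this
    simp at this
  have hparts : ∀ z : ℂ, 0 < z.re →
      DifferentiableAt ℂ (fun y => f₂ (csqrt y)) z ∧
      DifferentiableAt ℂ (fun y => f₁ (-(csqrt y))) z := by
    intro z hz
    have h1 := hsq_diff z hz
    have h2 : DifferentiableAt ℂ f₂ (csqrt z) :=
      ((hf₂ (csqrt z)) (hsq_re z hz)).differentiableAt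
    have h3 : DifferentiableAt ℂ f₁ (-(csqrt z)) := by
      refine ((hf₁ (-(csqrt z))) ?_).differentiableAt
      simp only [Set.mem_setOf_eq, Complex.neg_re]
      linarith [hsq_re z hz]
    exact ⟨h2.comp z h1, (h3.comp (csqrt z) differentiableAt_id.neg).comp z h1⟩
  have hgdiff : ∀ z : ℂ, 0 < z.re → DifferentiableAt ℂ gg z := by
    intro z hz
    obtain ⟨h2, h3⟩ := hparts z hz
    exact (h2.add h3).div_const 2
  have hhdiff : ∀ z : ℂ, 0 < z.re → DifferentiableAt ℂ hh z := by
    intro z hz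
    obtain ⟨h2, h3⟩ := hparts z hz
    exact ((h2.sub h3).div_const 2).div (hsq_diff z hz) (hsq_ne z hz)
  -- the annulus condition
  have hK : ∀ w : ℂ, ρ⁻¹ ≤ ‖w‖ → ‖w‖ ≤ ρ →
      0 < ((c:ℂ) + (s:ℂ) * (w + w⁻¹) / 2).re := by
    intro w h1 h2
    have hw0 : w ≠ 0 := by
      intro h
      rw [h] at h1
      simp at h1
      exact absurd h1 (not_le.mpr hρ0)
    have hre : ((c:ℂ) + (s:ℂ) * (w + w⁻¹) / 2).re = c + (s/2) * (w + w⁻¹).re := by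
      rw [show (c:ℂ) + (s:ℂ) * (w + w⁻¹) / 2 = (c:ℂ) + (((s/2 : ℝ)):ℂ) * (w + w⁻¹) by
        push_cast; ring]
      rw [Complex.add_re, Complex.ofReal_re, Complex.re_ofReal_mul]
    rw [hre]
    set t : ℝ := ‖w‖ with htdef
    have ht0 : 0 < t := by
      rw [htdef]
      exact lt_of_lt_of_le (inv_pos.mpr hρ0) h1
    have habs_inv : ‖w⁻¹‖ = t⁻¹ := by rw [htdef, norm_inv]
    have hre1 : -t ≤ w.re ∧ w.re ≤ t := by
      constructor
      · linarith [neg_abs_le w.re, Complex.abs_re_le_norm w]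
      · linarith [le_abs_self w.re, Complex.abs_re_le_norm w]
    have hre2 : -t⁻¹ ≤ (w⁻¹).re := by
      have := Complex.abs_re_le_norm w⁻¹
      rw [habs_inv] at this
      linarith [neg_abs_le (w⁻¹).re]
    have hsum : -(t + t⁻¹) ≤ (w + w⁻¹).re := by
      rw [Complex.add_re]
      linarith [hre1.1]
    have hmono : t + t⁻¹ ≤ ρ + ρ⁻¹ := by
      have h5 : t * t⁻¹ = 1 := mul_inv_cancel₀ ht0.ne'
      have h6 : ρ * ρ⁻¹ = 1 := mul_inv_cancel₀ hρ0.ne'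
      have key : (0:ℝ) ≤ (ρ - t) * (t * ρ - 1) := by
        apply mul_nonneg (by linarith)
        nlinarith [mul_le_mul_of_nonneg_right h1 hρ0.le]
      nlinarith [mul_nonneg key (mul_nonneg (inv_nonneg.mpr ht0.le) (inv_nonneg.mpr hρ0.le))]
    have hfinal : s * (ρ + ρ⁻¹) < 2 * c := by
      have hXpos : 0 < X := lt_trans one_pos hXgt1
      have hXrho : (X - ρ) * (ρ * X - 1) > 0 := by
        apply mul_pos (by linarith)
        nlinarith
      have hXval : X * (b - a) = a + b := by
        rw [hXdef]; field_simp
      have hrho_ineq : ρ + ρ⁻¹ < X + X⁻¹ := by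
        have e1 : ρ * X * (X + X⁻¹ - (ρ + ρ⁻¹)) = (X - ρ) * (ρ * X - 1) := by
          field_simp [hρ0.ne', hXpos.ne']
          ring
        nlinarith [mul_pos hρ0 hXpos]
      have hXsum : s * (X + X⁻¹) = 2 * c := by
        have hba' : (b - a) ≠ 0 := hba.ne'
        have habp : (a + b) ≠ 0 := by positivity
        have key : (X + X⁻¹) * (b^2 - a^2) = 2 * (a^2 + b^2) := by
          rw [hXdef, inv_div]
          field_simp [hba', habp]
          ring
        rw [hsdef, hcdef]
        linear_combination key / 2
      nlinarith
    calc (0:ℝ) < c + (s/2) * (-(ρ + ρ⁻¹)) := by nlinarith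
      _ ≤ c + (s/2) * (w + w⁻¹).re := by
          apply add_le_add_right
          apply mul_le_mul_of_nonneg_left _ (by linarith)
          linarith
  -- apply the core lemma
  obtain ⟨Mg, hMg0, hMg⟩ := core hs hρ1 hgdiff hK
  obtain ⟨Mh, hMh0, hMh⟩ := core hs hρ1 hhdiff hK
  -- membership facts
  have hIsub : ∀ x ∈ Iset, a ≤ |x| ∧ |x| ≤ b := by
    intro x hx
    rcases hx with hx | hx
    · rw [_root_.abs_of_nonpos (by linarith [hx.2] : x ≤ 0)]
      exact ⟨by linarith [hx.2], by linarith [hx.1]⟩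
    · rw [_root_.abs_of_nonneg (by linarith [hx.1] : 0 ≤ x)]
      exact ⟨hx.1, hx.2⟩
  have hx2mem : ∀ x ∈ Iset, x^2 ∈ Set.Icc (c - s) (c + s) := by
    intro x hx
    obtain ⟨h1, h2⟩ := hIsub x hx
    rw [hcs1, hcs2]
    constructor
    · nlinarith [_root_.abs_nonneg x, _root_.sq_abs x]
    · nlinarith [_root_.abs_nonneg x, _root_.sq_abs x]
  -- the pointwise identity
  have hident : ∀ x ∈ Iset, f x = (gg ((x^2 : ℝ):ℂ)).re + x * (hh ((x^2:ℝ):ℂ)).re := by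
    intro x hx
    have h2 : (0:ℝ) ≤ x^2 := sq_nonneg x
    have hsq2 : csqrt ((x^2:ℝ):ℂ) = ((|x| : ℝ):ℂ) := by
      rw [hsq_real _ h2]
      norm_cast
      exact Real.sqrt_sq_eq_abs x
    rcases hx with hx | hx
    · have hxneg : x < 0 := lt_of_le_of_lt hx.2 (by linarith)
      have habs : |x| = -x := _root_.abs_of_neg hxneg
      have hmem2 : -x ∈ Set.Icc a b := ⟨by linarith [hx.2], by linarith [hx.1]⟩
      have hf2v : f₂ (((-x : ℝ)):ℂ) = ((f (-x) : ℝ):ℂ) := hf₂f (-x) hmem2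
      have hf1v : f₁ ((x : ℝ):ℂ) = ((f x : ℝ):ℂ) := hf₁f x hx
      rw [habs] at hsq2
      have hgg1 : gg ((x^2:ℝ):ℂ) = (((f (-x) + f x)/2 : ℝ) : ℂ) := by
        simp only [hggdef]
        rw [hsq2, show (-((((-x:ℝ))):ℂ)) = ((x:ℝ):ℂ) by push_cast; ring, hf2v, hf1v]
        push_cast
        ring
      have hhh1 : hh ((x^2:ℝ):ℂ) = (((f (-x) - f x)/(2 * (-x)) : ℝ) : ℂ) := by
        simp only [hhhdef]
        rw [hsq2, show (-((((-x:ℝ))):ℂ)) = ((x:ℝ):ℂ) by push_cast; ring, hf2v, hf1v]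
        have hx0c : ((x:ℝ):ℂ) ≠ 0 := by exact_mod_cast hxneg.ne
        push_cast
        field_simp
        try ring
      rw [hgg1, hhh1, Complex.ofReal_re, Complex.ofReal_re]
      have hx0 : x ≠ 0 := hxneg.ne
      field_simp
      try ring
    · have hxpos : 0 < x := lt_of_lt_of_le ha hx.1
      have habs : |x| = x := _root_.abs_of_pos hxpos
      have hmemneg : -x ∈ Set.Icc (-b) (-a) := ⟨by linarith [hx.2], by linarith [hx.1]⟩
      have hf2v := hf₂f x hx
      have hf1v : f₁ (((-x : ℝ)):ℂ) = ((f (-x) : ℝ):ℂ) := hf₁f (-x) hmemneg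
      rw [habs] at hsq2
      have hgg1 : gg ((x^2:ℝ):ℂ) = (((f x + f (-x))/2 : ℝ) : ℂ) := by
        simp only [hggdef]
        rw [hsq2, show (-((x:ℝ):ℂ)) = ((((-x:ℝ))):ℂ) by push_cast; ring, hf2v, hf1v]
        push_cast
        ring
      have hhh1 : hh ((x^2:ℝ):ℂ) = (((f x - f (-x))/(2 * x) : ℝ) : ℂ) := by
        simp only [hhhdef]
        rw [hsq2, show (-((x:ℝ):ℂ)) = ((((-x:ℝ))):ℂ) by push_cast; ring, hf2v, hf1v]
        have hx0c : ((x:ℝ):ℂ) ≠ 0 := by exact_mod_cast hxpos.ne'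
        push_cast
        field_simp
        try ring
      rw [hgg1, hhh1, Complex.ofReal_re, Complex.ofReal_re]
      have hx0 : x ≠ 0 := hxpos.ne'
      field_simp
      try ring
  -- compactness and bound for k = 0
  have hIcomp : IsCompact Iset := isCompact_Icc.union isCompact_Icc
  have hIne : Iset.Nonempty := ⟨a, Or.inr ⟨le_refl a, hab.le⟩⟩
  obtain ⟨M₂, hM₂⟩ := hIcomp.exists_bound_of_continuousOn hf
  have hM₂0 : 0 ≤ M₂ := le_trans (norm_nonneg _) (hM₂ a (Or.inr ⟨le_refl a, hab.le⟩))
  have hMgh0 : 0 ≤ (Mg + b * Mh) * ξ :=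
    mul_nonneg (add_nonneg hMg0 (mul_nonneg hb.le hMh0)) (by linarith)
  set C : ℝ := (Mg + b * Mh) * ξ + M₂ + 1 with hCdef
  have hC0 : 0 < C := by rw [hCdef]; linarith
  refine ⟨C, hC0, fun k => ?_⟩
  have hξ0 : 0 < ξ := lt_trans one_pos hξ1
  have hrpow_pos : 0 < ξ ^ (-(k:ℝ)/2) := Real.rpow_pos_of_pos hξ0 _
  rcases Nat.eq_zero_or_pos k with rfl | hk
  · simp only [Nat.cast_zero, neg_zero, zero_div, Real.rpow_zero, mul_one]
    have h0 : bestApproxError f Iset 0 ≤ M₂ := by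
      apply bApprox_le hIne 0 (by simp)
      intro x hx
      have := hM₂ x hx
      rw [Real.norm_eq_abs] at this
      simpa using this
    rw [hCdef]
    linarith
  · set N : ℕ := (k-1)/2 with hNdef
    obtain ⟨P, hPdeg, hP⟩ := hMg N
    obtain ⟨Q, hQdeg, hQ⟩ := hMh N
    set r : Polynomial ℝ := P.comp (Polynomial.X^2)
        + Polynomial.X * Q.comp (Polynomial.X^2) with hrdef
    have h2N : 2 * N + 1 ≤ k := by omega
    have hrdeg : r.natDegree ≤ k := by
      rw [hrdef]
      refine le_trans (Polynomial.natDegree_add_le _ _) (max_le ?_ ?_)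
      · refine le_trans Polynomial.natDegree_comp_le ?_
        rw [Polynomial.natDegree_X_pow]
        omega
      · refine le_trans Polynomial.natDegree_mul_le ?_
        rw [Polynomial.natDegree_X]
        have := le_trans (Polynomial.natDegree_comp_le
          (p := Q) (q := Polynomial.X^2)) (by rw [Polynomial.natDegree_X_pow]; omega :
            Q.natDegree * (Polynomial.X^2 : Polynomial ℝ).natDegree ≤ 2 * N)
        omega
    have herr : ∀ x ∈ Iset, |f x - r.eval x| ≤ (Mg + b * Mh) * (ρ⁻¹)^N := by
      intro x hx
      have hy := hx2mem x hx
      have h1 := hP (x^2) hy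
      have h2 := hQ (x^2) hy
      have habsx : |x| ≤ b := (hIsub x hx).2
      have hreval : r.eval x = P.eval (x^2) + x * Q.eval (x^2) := by
        simp [hrdef, Polynomial.eval_comp]
      rw [hreval, hident x hx]
      have e1 : (gg ((x^2:ℝ):ℂ)).re + x * (hh ((x^2:ℝ):ℂ)).re
            - (P.eval (x^2) + x * Q.eval (x^2))
          = ((gg ((x^2:ℝ):ℂ)).re - P.eval (x^2))
            + x * ((hh ((x^2:ℝ):ℂ)).re - Q.eval (x^2)) := by ring
      rw [e1]
      have hρiN : (0:ℝ) ≤ (ρ⁻¹)^N := by positivity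
      calc |((gg ((x^2:ℝ):ℂ)).re - P.eval (x^2))
            + x * ((hh ((x^2:ℝ):ℂ)).re - Q.eval (x^2))|
          ≤ |(gg ((x^2:ℝ):ℂ)).re - P.eval (x^2)|
            + |x| * |(hh ((x^2:ℝ):ℂ)).re - Q.eval (x^2)| := by
            refine le_trans (abs_add_le _ _) ?_
            rw [_root_.abs_mul]
        _ ≤ Mg * (ρ⁻¹)^N + b * (Mh * (ρ⁻¹)^N) := by
            refine add_le_add h1 ?_
            refine mul_le_mul habsx h2 (_root_.abs_nonneg _) hb.le
        _ = (Mg + b * Mh) * (ρ⁻¹)^N := by ring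
    have hba2 := bApprox_le hIne r hrdeg herr
    have hNk : (k:ℝ) ≤ 2 * (N:ℝ) + 2 := by
      have : k ≤ 2 * N + 2 := by omega
      exact_mod_cast this
    have hcomp : (ρ⁻¹)^N ≤ ξ * ξ ^ (-(k:ℝ)/2) := by
      have s0 : ρ⁻¹ ≤ ξ⁻¹ := by
        rw [inv_le_inv₀ hρ0 hξ0]
        exact hξρ.le
      have s1 : (ρ⁻¹)^N ≤ (ξ⁻¹)^N := pow_le_pow_left₀ (by positivity) s0 N
      have s2 : ((ξ⁻¹)^N : ℝ) = ξ ^ (-(N:ℝ)) := by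
        rw [Real.rpow_neg hξ0.le, Real.rpow_natCast, inv_pow]
      have s3 : ξ ^ (-(N:ℝ)) ≤ ξ ^ (1 - (k:ℝ)/2) := by
        rw [Real.rpow_le_rpow_left_iff hξ1]
        linarith
      have s4 : ξ ^ (1 - (k:ℝ)/2) = ξ * ξ ^ (-(k:ℝ)/2) := by
        rw [show (1 - (k:ℝ)/2) = 1 + (-(k:ℝ)/2) by ring, Real.rpow_add hξ0, Real.rpow_one]
      calc (ρ⁻¹)^N ≤ (ξ⁻¹)^N := s1
        _ = ξ ^ (-(N:ℝ)) := s2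
        _ ≤ ξ ^ (1 - (k:ℝ)/2) := s3
        _ = ξ * ξ ^ (-(k:ℝ)/2) := s4
    calc bestApproxError f Iset k ≤ (Mg + b * Mh) * (ρ⁻¹)^N := hba2
      _ ≤ (Mg + b * Mh) * (ξ * ξ ^ (-(k:ℝ)/2)) := by
          refine mul_le_mul_of_nonneg_left hcomp ?_
          exact add_nonneg hMg0 (mul_nonneg hb.le hMh0)
      _ = ((Mg + b * Mh) * ξ) * ξ ^ (-(k:ℝ)/2) := by ring
      _ ≤ C * ξ ^ (-(k:ℝ)/2) := by
          refine mul_le_mul_of_nonneg_right ?_ hrpow_pos.le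
          rw [hCdef]
          linarith
end

section
/- Let A and B be n×n complex matrices whose entries satisfy |A_{ij}| ≤ c₁·e^{−α|i−j|} and |B_{ij}| ≤ c₂·e^{−α|i−j|} for all i, j, with c₁, c₂ > 0 and α > 0. Then for every α′ with 0 < α′ < α, setting ω = α − α′, the product C = AB satisfies |C_{ij}| ≤ c·e^{−α′|i−j|} for all i, j, with c = c₁c₂·(1 + e^{−ω})/(1 − e^{−ω}); in particular c does not depend on n. -/
open Finset

lemma natdist_real (x y : ℕ) : (Nat.dist x y : ℝ) = |(x:ℝ) - (y:ℝ)| := by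
  rcases le_total x y with h | h
  · rw [Nat.dist_eq_sub_of_le h, Nat.cast_sub h, abs_sub_comm,
      abs_of_nonneg (sub_nonneg.mpr (Nat.cast_le.mpr h))]
  · rw [Nat.dist_comm, Nat.dist_eq_sub_of_le h, Nat.cast_sub h,
      abs_of_nonneg (sub_nonneg.mpr (Nat.cast_le.mpr h))]

lemma my_geom_le (q : ℝ) (hq0 : 0 ≤ q) (hq1 : q < 1) (N : ℕ) :
    ∑ m ∈ Finset.range N, q ^ m ≤ 1 / (1 - q) := by
  have h1 : (0:ℝ) < 1 - q := by linarith
  have hN : 0 ≤ q ^ N := pow_nonneg hq0 _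
  rw [geom_sum_eq (by linarith : q ≠ 1)]
  have he : (q ^ N - 1) / (q - 1) = (1 - q ^ N) / (1 - q) := by
    rw [← neg_div_neg_eq]; ring_nf
  rw [he, div_le_div_iff₀ h1 h1]
  nlinarith

lemma geo_bound (q : ℝ) (hq0 : 0 ≤ q) (hq1 : q < 1) (n i : ℕ) (hi : i < n) :
    ∑ k ∈ Finset.range n, q ^ (Nat.dist i k) ≤ (1 + q) / (1 - q) := by
  have h1 : (0:ℝ) < 1 - q := by linarith
  rw [← Finset.sum_filter_add_sum_filter_not (Finset.range n)
    (fun k => k ≤ i) (fun k => q ^ (Nat.dist i k))]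
  have hf1 : (Finset.range n).filter (fun k => k ≤ i) = Finset.range (i+1) := by
    ext k; simp [Nat.lt_succ_iff]; intro h; omega
  have hf2 : (Finset.range n).filter (fun k => ¬ k ≤ i) = Finset.Ico (i+1) n := by
    ext k; simp; omega
  rw [hf1, hf2]
  have hS1 : ∑ k ∈ Finset.range (i+1), q ^ (Nat.dist i k) ≤ 1 / (1 - q) := by
    have he : ∑ k ∈ Finset.range (i+1), q ^ (Nat.dist i k)
        = ∑ m ∈ Finset.range (i+1), q ^ m := by
      rw [← Finset.sum_range_reflect]
      apply Finset.sum_congr rfl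
      intro m hm; simp at hm
      congr 1; unfold Nat.dist; omega
    rw [he]; exact my_geom_le q hq0 hq1 _
  have hS2 : ∑ k ∈ Finset.Ico (i+1) n, q ^ (Nat.dist i k) ≤ q / (1 - q) := by
    rw [Finset.sum_Ico_eq_sum_range]
    have he : ∀ m ∈ Finset.range (n - (i+1)), q ^ (Nat.dist i (i+1+m)) = q * q ^ m := by
      intro m hm
      have : Nat.dist i (i+1+m) = m + 1 := by unfold Nat.dist; omega
      rw [this, pow_succ]; ring
    rw [Finset.sum_congr rfl he, ← Finset.mul_sum]
    calc q * ∑ m ∈ Finset.range (n - (i+1)), q ^ m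
        ≤ q * (1 / (1 - q)) := by
          apply mul_le_mul_of_nonneg_left (my_geom_le q hq0 hq1 _) hq0
      _ = q / (1 - q) := by ring
  linarith [hS1, hS2, (by ring : (1:ℝ)/(1-q) + q/(1-q) = (1+q)/(1-q))]

/-- If `|A_{ij}| ≤ c₁·e^{−α|i−j|}` and `|B_{ij}| ≤ c₂·e^{−α|i−j|}`, then for every
`0 < α′ < α`, with `ω = α − α′`, the product `C = AB` satisfies
`|C_{ij}| ≤ c·e^{−α′|i−j|}` with `c = c₁c₂·(1 + e^{−ω})/(1 − e^{−ω})`, independent of `n`. -/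
theorem stmt_14 (n : ℕ) (c₁ c₂ α : ℝ) (hc₁ : 0 < c₁) (hc₂ : 0 < c₂) (hα : 0 < α)
    (A B : Matrix (Fin n) (Fin n) ℂ)
    (hA : ∀ i j : Fin n, ‖A i j‖ ≤ c₁ * Real.exp (-α * |(i : ℝ) - (j : ℝ)|))
    (hB : ∀ i j : Fin n, ‖B i j‖ ≤ c₂ * Real.exp (-α * |(i : ℝ) - (j : ℝ)|))
    (α' : ℝ) (hα'0 : 0 < α') (hα' : α' < α) :
    ∀ i j : Fin n,
      ‖(A * B) i j‖ ≤
        (c₁ * c₂ * (1 + Real.exp (-(α - α'))) / (1 - Real.exp (-(α - α')))) *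
          Real.exp (-α' * |(i : ℝ) - (j : ℝ)|) := by
  intro i j
  set ω := α - α' with hω
  have hω0 : 0 < ω := by linarith
  set q := Real.exp (-ω) with hq
  have hq0 : 0 < q := Real.exp_pos _
  have hq1 : q < 1 := Real.exp_lt_one_iff.mpr (by linarith)
  have hmul : (A * B) i j = ∑ k : Fin n, A i k * B k j := by
    simp [Matrix.mul_apply]
  rw [hmul]
  have habs : ‖∑ k : Fin n, A i k * B k j‖
      ≤ ∑ k : Fin n, ‖A i k * B k j‖ := by
    exact norm_sum_le _ _
  -- per-term bound
  have hterm : ∀ k : Fin n, ‖A i k * B k j‖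
      ≤ c₁ * c₂ * Real.exp (-α' * |(i:ℝ) - (j:ℝ)|) * q ^ (Nat.dist i k) := by
    intro k
    rw [norm_mul]
    have h1 := hA i k
    have h2 := hB k j
    have hb : ‖A i k‖ * ‖B k j‖
        ≤ (c₁ * Real.exp (-α * |(i:ℝ) - (k:ℝ)|)) * (c₂ * Real.exp (-α * |(k:ℝ) - (j:ℝ)|)) := by
      apply mul_le_mul h1 h2 (norm_nonneg _)
      positivity
    refine hb.trans ?_
    have hE : Real.exp (-α * |(i:ℝ) - (k:ℝ)|) * Real.exp (-α * |(k:ℝ) - (j:ℝ)|)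
        ≤ Real.exp (-α' * |(i:ℝ) - (j:ℝ)|) * q ^ (Nat.dist i k) := by
      rw [← Real.exp_add, hq, ← Real.exp_nat_mul, ← Real.exp_add]
      apply Real.exp_le_exp.mpr
      have hd : (Nat.dist (i:ℕ) (k:ℕ) : ℝ) = |(i:ℝ) - (k:ℝ)| := natdist_real i k
      have htri : |(i:ℝ) - (j:ℝ)| ≤ |(i:ℝ) - (k:ℝ)| + |(k:ℝ) - (j:ℝ)| := abs_sub_le _ _ _
      have hk0 : (0:ℝ) ≤ |(k:ℝ) - (j:ℝ)| := abs_nonneg _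
      rw [hd]
      nlinarith [abs_nonneg ((i:ℝ) - (k:ℝ))]
    calc c₁ * Real.exp (-α * |(i:ℝ) - (k:ℝ)|) * (c₂ * Real.exp (-α * |(k:ℝ) - (j:ℝ)|))
        = c₁ * c₂ * (Real.exp (-α * |(i:ℝ) - (k:ℝ)|) * Real.exp (-α * |(k:ℝ) - (j:ℝ)|)) := by ring
      _ ≤ c₁ * c₂ * (Real.exp (-α' * |(i:ℝ) - (j:ℝ)|) * q ^ (Nat.dist i k)) := by
          apply mul_le_mul_of_nonneg_left hE (by positivity)
      _ = c₁ * c₂ * Real.exp (-α' * |(i:ℝ) - (j:ℝ)|) * q ^ (Nat.dist i k) := by ring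
  have hsum : ∑ k : Fin n, ‖A i k * B k j‖
      ≤ c₁ * c₂ * Real.exp (-α' * |(i:ℝ) - (j:ℝ)|) * ∑ k : Fin n, q ^ (Nat.dist i k) := by
    rw [Finset.mul_sum]
    exact Finset.sum_le_sum (fun k _ => hterm k)
  have hgeo : ∑ k : Fin n, q ^ (Nat.dist (i:ℕ) (k:ℕ)) ≤ (1 + q) / (1 - q) := by
    rw [Fin.sum_univ_eq_sum_range (fun k => q ^ (Nat.dist (i:ℕ) k))]
    exact geo_bound q hq0.le hq1 n i i.isLt
  refine habs.trans (hsum.trans ?_)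
  have : c₁ * c₂ * Real.exp (-α' * |(i:ℝ) - (j:ℝ)|) * ∑ k : Fin n, q ^ (Nat.dist i k)
      ≤ c₁ * c₂ * Real.exp (-α' * |(i:ℝ) - (j:ℝ)|) * ((1 + q) / (1 - q)) := by
    apply mul_le_mul_of_nonneg_left hgeo (by positivity)
  refine this.trans ?_
  rw [hq]
  apply le_of_eq; ring
end

section
/- Let n = 2·n_e be even and let H_n be the n×n tridiagonal matrix with zero diagonal entries and all sub- and super-diagonal entries equal to 1/2. Let P_n be the spectral projector of H_n associated with the interval [−1,0) (equivalently, the orthogonal projector onto the span of the eigenvectors corresponding to the n_e negative eigenvalues of H_n). Then every diagonal entry of P_n equals 1/2: [P_n]_{ii} = 1/2 for all i = 1,…,n. Equivalently, since the normalized eigenvectors of H_n are v_k(j) = √(2/(n+1))·sin(jkπ/(n+1)) with eigenvalues cos(kπ/(n+1)) in descending order, one has (2/(n+1))·Σ_{k=1}^{n/2} sin²(ikπ/(n+1)) = 1/2 for every i = 1,…,n. -/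
/-- The `N×N` tridiagonal matrix with zero diagonal and `1/2` on the first sub- and
super-diagonals. -/
noncomputable def trid (N : ℕ) : Matrix (Fin N) (Fin N) ℂ :=
  fun p q => if |(p : ℤ) - (q : ℤ)| = 1 then (1 / 2 : ℂ) else 0

lemma trid_isHermitian (N : ℕ) : (trid N).IsHermitian := by
  ext p q
  simp only [Matrix.conjTranspose_apply, trid]
  rw [abs_sub_comm]
  split <;> simp

open Polynomial in
theorem aeval_conj (n : ℕ) (U X : Matrix (Fin n) (Fin n) ℂ) (h1 : U * star U = 1) (h2 : star U * U = 1)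
    (p : ℂ[X]) : aeval (U * X * star U) p = U * aeval X p * star U := by
  let φ : Matrix (Fin n) (Fin n) ℂ →ₐ[ℂ] Matrix (Fin n) (Fin n) ℂ :=
    { toFun := fun Y => U * Y * star U
      map_one' := by rw [mul_one, h1]
      map_mul' := by
        intro a b
        rw [show U * a * star U * (U * b * star U) = U * a * (star U * U) * b * star U by
          noncomm_ring, h2, mul_one, mul_assoc U a b]
      map_zero' := by simp
      map_add' := by intro a b; noncomm_ring
      commutes' := by
        intro r
        simp only [Algebra.algebraMap_eq_smul_one, Matrix.mul_smul, Matrix.smul_mul, mul_one, h1] }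
  have := Polynomial.aeval_algHom_apply φ X p
  simpa [φ] using this
open Polynomial in
theorem aeval_diag (n : ℕ) (d : Fin n → ℂ) (p : ℂ[X]) :
    aeval (Matrix.diagonal d) p = Matrix.diagonal (fun i => p.eval (d i)) := by
  have := Polynomial.aeval_algHom_apply (Matrix.diagonalAlgHom (n := Fin n) ℂ) d p
  simp only [Matrix.diagonalAlgHom_apply] at this
  rw [this]
  have h3 : (aeval d p) = fun i => p.eval (d i) := by
    funext i
    have h2 := Polynomial.aeval_algHom_apply (Pi.evalAlgHom ℂ (fun _ : Fin n => ℂ) i) d p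
    simp only [Pi.evalAlgHom_apply] at h2
    rw [← h2, Polynomial.coe_aeval_eq_eval]
  rw [h3]

lemma trid_kernel (n_e n : ℕ) (hn : n = 2 * n_e) (w : Fin n → ℂ)
    (hw : ∀ j : Fin n, ∑ q, trid n j q * w q = 0) : w = 0 := by
  rcases Nat.eq_zero_or_pos n with h0 | hpos
  · subst h0; funext j; exact absurd j.2 (by omega)
  set v : ℕ → ℂ := fun q => if h : q < n then w ⟨q, h⟩ else 0 with hv
  have hvz : ∀ q, n ≤ q → v q = 0 := by intro q hq; simp [hv, Nat.not_lt.mpr hq]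
  have hrow : ∀ m, m < n → (if m = 0 then 0 else v (m - 1)) + v (m + 1) = 0 := by
    intro m hm
    have h := hw ⟨m, hm⟩
    have hterm : ∀ q : Fin n, trid n ⟨m, hm⟩ q * w q
        = (fun t : ℕ => (if |(m : ℤ) - (t : ℤ)| = 1 then (1/2 : ℂ) else 0) * v t) (q : ℕ) := by
      intro q
      simp only [trid, hv, q.2, dif_pos, Fin.eta]
    rw [Finset.sum_congr rfl (fun q _ => hterm q),
      Fin.sum_univ_eq_sum_range (fun t : ℕ => (if |(m : ℤ) - (t : ℤ)| = 1 then (1/2 : ℂ) else 0) * v t)] at h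
    have hsplit : ∀ q ∈ Finset.range n,
        (if |(m : ℤ) - (q : ℤ)| = 1 then (1/2 : ℂ) else 0) * v q
        = (if q + 1 = m then (1/2 : ℂ) * v q else 0) + (if q = m + 1 then (1/2 : ℂ) * v q else 0) := by
      intro q _
      simp only [show (|(m : ℤ) - (q : ℤ)| = 1) ↔ (q + 1 = m ∨ q = m + 1) by
        rw [abs_eq (by norm_num : (0:ℤ) ≤ 1)]; omega]
      split_ifs <;> first | ring1 | omega | (exfalso; omega)
    rw [Finset.sum_congr rfl hsplit, Finset.sum_add_distrib] at h
    have hs2 : ∑ q ∈ Finset.range n, (if q = m + 1 then (1/2 : ℂ) * v q else 0)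
        = (1/2 : ℂ) * v (m + 1) := by
      rw [Finset.sum_ite_eq' (Finset.range n) (m+1) (fun q => (1/2 : ℂ) * v q)]
      split_ifs with h1
      · rfl
      · rw [hvz (m+1) (by simp at h1; omega)]; ring
    have hs1 : ∑ q ∈ Finset.range n, (if q + 1 = m then (1/2 : ℂ) * v q else 0)
        = (1/2 : ℂ) * (if m = 0 then 0 else v (m - 1)) := by
      rcases Nat.eq_zero_or_pos m with hm0 | hm1
      · subst hm0
        rw [Finset.sum_eq_zero (fun q _ => by simp)]
        simp
      · have heq : ∀ q ∈ Finset.range n, (if q + 1 = m then (1/2 : ℂ) * v q else 0)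
            = (if q = m - 1 then (1/2 : ℂ) * v q else 0) := by
          intro q _; split_ifs with h1 h2 h2 <;> first | rfl | omega
        rw [Finset.sum_congr rfl heq,
          Finset.sum_ite_eq' (Finset.range n) (m-1) (fun q => (1/2 : ℂ) * v q),
          if_pos (Finset.mem_range.mpr (by omega)), if_neg (by omega)]
    rw [hs1, hs2] at h
    rw [show (if m = 0 then (0:ℂ) else v (m - 1)) + v (m + 1)
      = 2 * ((1/2 : ℂ) * (if m = 0 then 0 else v (m - 1)) + (1/2 : ℂ) * v (m+1)) by ring, h]
    ring
  have claim : ∀ m, m < n → v m = (if m % 2 = 0 then (-1 : ℂ)^(m/2) else 0) * v 0 := by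
    intro m
    induction m using Nat.strong_induction_on with
    | _ m ih =>
      intro hmn
      rcases m with _ | m1
      · simp
      rcases m1 with _ | m'
      · have h0 := hrow 0 hpos
        rw [if_pos rfl, zero_add] at h0
        rw [h0, if_neg (by omega)]
        ring
      · have hr := hrow (m'+1) (by omega)
        rw [if_neg (by omega)] at hr
        simp only [Nat.add_sub_cancel] at hr
        have ihm := ih m' (by omega) (by omega)
        have hneg : v (m'+2) = - v m' := by linear_combination hr
        rw [hneg, ihm]
        have hpar : (m'+2) % 2 = m' % 2 := by omega
        have hdiv : (m'+2)/2 = m'/2 + 1 := by omega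
        rw [hpar, hdiv]
        split_ifs <;> ring
  have hv0 : v 0 = 0 := by
    have hr := hrow (n-1) (by omega)
    rw [if_neg (by omega), hvz (n-1+1) (by omega), add_zero] at hr
    have hc := claim (n-1-1) (by omega)
    rw [hc, if_pos (by omega)] at hr
    have hne : ((-1 : ℂ)^((n-1-1)/2)) ≠ 0 := by
      apply pow_ne_zero; norm_num
    exact (mul_eq_zero.mp hr).resolve_left hne
  funext j
  have hj := claim j j.2
  rw [hv0, mul_zero] at hj
  simpa [hv, j.2] using hj

-- eigenvalues are nonzero
lemma trid_eig_ne (n_e n : ℕ) (hn : n = 2 * n_e) (k : Fin n) :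
    (trid_isHermitian n).eigenvalues k ≠ 0 := by
  set hH := trid_isHermitian n
  set U : Matrix (Fin n) (Fin n) ℂ := (hH.eigenvectorUnitary : Matrix (Fin n) (Fin n) ℂ) with hU
  have hU1 : U * star U = 1 := Matrix.mem_unitaryGroup_iff.mp (hH.eigenvectorUnitary).2
  have hU2 : star U * U = 1 := Matrix.mem_unitaryGroup_iff'.mp (hH.eigenvectorUnitary).2
  intro hzero
  have hHU : trid n * U = U * Matrix.diagonal (RCLike.ofReal ∘ hH.eigenvalues) := by
    conv_lhs => rw [hH.spectral_theorem, Unitary.conjStarAlgAut_apply]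
    rw [mul_assoc, mul_assoc, hU2, mul_one]
  have hcol : ∀ j : Fin n, ∑ q, trid n j q * U q k = 0 := by
    intro j
    have := congrFun (congrFun hHU j) k
    rw [Matrix.mul_apply, Matrix.mul_diagonal] at this
    rw [this]
    simp [hzero]
  have hz := trid_kernel n_e n hn (fun q => U q k) hcol
  have h1 : (star U * U) k k = 1 := by rw [hU2]; simp
  rw [Matrix.mul_apply] at h1
  simp only [Matrix.star_apply] at h1
  have : ∀ q : Fin n, star (U q k) * U q k = 0 := by
    intro q
    have : U q k = 0 := congrFun hz q
    rw [this]; simp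
  rw [Finset.sum_congr rfl (fun q _ => this q)] at h1
  simp at h1

open Polynomial in
lemma proj_diag (n_e n : ℕ) (hn : n = 2 * n_e) (i : Fin n) :
    (((trid_isHermitian n).eigenvectorUnitary : Matrix (Fin n) (Fin n) ℂ) *
        Matrix.diagonal
          (fun k : Fin n => if (trid_isHermitian n).eigenvalues k < 0 then (1 : ℂ) else 0) *
        star ((trid_isHermitian n).eigenvectorUnitary : Matrix (Fin n) (Fin n) ℂ)) i i
      = 1 / 2 := by
  set hH := trid_isHermitian n with hhH
  set U : Matrix (Fin n) (Fin n) ℂ := (hH.eigenvectorUnitary : Matrix (Fin n) (Fin n) ℂ) with hU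
  have hU1 : U * star U = 1 := Matrix.mem_unitaryGroup_iff.mp (hH.eigenvectorUnitary).2
  have hU2 : star U * U = 1 := Matrix.mem_unitaryGroup_iff'.mp (hH.eigenvectorUnitary).2
  set μ := hH.eigenvalues with hμ
  have hμne : ∀ k, μ k ≠ 0 := fun k => trid_eig_ne n_e n hn k
  set χ : Fin n → ℂ := fun k => if μ k < 0 then (1 : ℂ) else 0 with hχ
  set P : Matrix (Fin n) (Fin n) ℂ := U * Matrix.diagonal χ * star U with hPdef
  show P i i = 1 / 2
  classical
  set s : Finset ℂ := (Finset.univ.image (fun k : Fin n => ((μ k : ℝ) : ℂ)))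
      ∪ (Finset.univ.image (fun k : Fin n => ((-(μ k) : ℝ) : ℂ))) with hs
  set r : ℂ → ℂ := fun z => if z.re < 0 then 1 else 0 with hr
  set p : ℂ[X] := Lagrange.interpolate s id r with hp
  have heval : ∀ z ∈ s, p.eval z = r z := by
    intro z hz
    exact Lagrange.eval_interpolate_at_node r (Set.injOn_id _) hz
  have key : ∀ m : ℕ, (-1:ℂ)^m * (-1)^m = 1 := fun m => by rw [← mul_pow]; norm_num
  have hP1 : aeval (trid n) p = P := by
    conv_lhs => rw [hH.spectral_theorem, Unitary.conjStarAlgAut_apply]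
    rw [← hU, aeval_conj n U _ hU1 hU2, aeval_diag]
    rw [show (fun k : Fin n => p.eval ((RCLike.ofReal ∘ μ) k)) = χ by
      funext k
      show p.eval ((μ k : ℝ) : ℂ) = χ k
      have hk : ((μ k : ℝ) : ℂ) ∈ s := by
        rw [hs]; apply Finset.mem_union_left; exact Finset.mem_image_of_mem _ (Finset.mem_univ k)
      rw [heval _ hk, hr, hχ]
      simp [Complex.ofReal_re]]
  have hP2 : aeval (-(trid n)) p = 1 - P := by
    have hdneg : Matrix.diagonal (fun k : Fin n => -((μ k : ℝ) : ℂ))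
        = -Matrix.diagonal (fun k : Fin n => ((μ k : ℝ) : ℂ)) := by
      ext a b; by_cases h : a = b <;> simp [Matrix.diagonal_apply, h]
    have hneg : -(trid n) = U * Matrix.diagonal (fun k : Fin n => -((μ k : ℝ) : ℂ)) * star U := by
      rw [hdneg, mul_neg, neg_mul, neg_inj]
      conv_lhs => rw [hH.spectral_theorem, Unitary.conjStarAlgAut_apply]
      rw [← hU]
      rfl
    rw [hneg, aeval_conj n U _ hU1 hU2, aeval_diag]
    have hdval : (fun k : Fin n => p.eval (-((μ k : ℝ) : ℂ))) = fun k => 1 - χ k := by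
      funext k
      have hk : ((-(μ k) : ℝ) : ℂ) ∈ s := by
        rw [hs]; apply Finset.mem_union_right; exact Finset.mem_image_of_mem _ (Finset.mem_univ k)
      rw [show (-((μ k : ℝ) : ℂ)) = ((-(μ k) : ℝ) : ℂ) by push_cast; ring, heval _ hk, hr, hχ]
      simp only [Complex.ofReal_re]
      rcases lt_trichotomy (μ k) 0 with h | h | h
      · rw [if_neg (by linarith), if_pos h]; ring
      · exact absurd h (hμne k)
      · rw [if_pos (by linarith), if_neg (by linarith)]; ring
    rw [hdval]
    have hone : Matrix.diagonal (fun k : Fin n => 1 - χ k) = 1 - Matrix.diagonal χ := by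
      ext a b
      by_cases h : a = b <;>
        simp [Matrix.diagonal_apply, h, Matrix.one_apply, Matrix.sub_apply]
    rw [hone, Matrix.mul_sub, Matrix.sub_mul, mul_one, hU1, hPdef]
  set Dm : Matrix (Fin n) (Fin n) ℂ := Matrix.diagonal (fun j : Fin n => (-1 : ℂ)^(j : ℕ)) with hDm
  have hDstar : star Dm = Dm := by
    rw [hDm, Matrix.star_eq_conjTranspose, Matrix.diagonal_conjTranspose,
      show (star fun j : Fin n => (-1:ℂ)^(j:ℕ)) = (fun j : Fin n => (-1:ℂ)^(j:ℕ)) from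
        funext fun j => by
          show star ((-1:ℂ)^(j:ℕ)) = _
          rw [star_pow]; norm_num]
  have hDD : Dm * Dm = 1 := by
    rw [hDm, Matrix.diagonal_mul_diagonal]
    have : (fun j : Fin n => (-1 : ℂ)^(j:ℕ) * (-1)^(j:ℕ)) = fun _ => (1:ℂ) := by
      funext j; exact key _
    rw [this, Matrix.diagonal_one]
  have hDHD : Dm * trid n * Dm = -(trid n) := by
    ext a b
    rw [Matrix.mul_diagonal, Matrix.diagonal_mul, Matrix.neg_apply]
    show (-1:ℂ)^(a:ℕ) * trid n a b * (-1)^(b:ℕ) = -(trid n a b)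
    by_cases hab : |(a : ℤ) - (b : ℤ)| = 1
    · have hsign : (-1:ℂ)^(a:ℕ) * (-1)^(b:ℕ) = -1 := by
        rcases (abs_eq (by norm_num : (0:ℤ) ≤ 1)).mp hab with h | h
        · have ha : (a:ℕ) = (b:ℕ) + 1 := by omega
          rw [ha, pow_succ]
          linear_combination (-1 : ℂ) * key (b:ℕ)
        · have hb : (b:ℕ) = (a:ℕ) + 1 := by omega
          rw [hb, pow_succ]
          linear_combination (-1 : ℂ) * key (a:ℕ)
      calc (-1:ℂ)^(a:ℕ) * trid n a b * (-1)^(b:ℕ)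
          = ((-1:ℂ)^(a:ℕ) * (-1)^(b:ℕ)) * trid n a b := by ring
        _ = -(trid n a b) := by rw [hsign]; ring
    · simp [trid, hab]
  have hconj : Dm * P * Dm = 1 - P := by
    have h := aeval_conj n Dm (trid n) (by rw [hDstar, hDD]) (by rw [hDstar, hDD]) p
    rw [hDstar, hDHD, hP2, hP1] at h
    exact h.symm
  have hentry := congrFun (congrFun hconj i) i
  rw [Matrix.mul_diagonal, Matrix.diagonal_mul, Matrix.sub_apply, Matrix.one_apply_eq] at hentry
  have hsq : (-1:ℂ)^(i:ℕ) * P i i * (-1)^(i:ℕ) = P i i := by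
    calc (-1:ℂ)^(i:ℕ) * P i i * (-1)^(i:ℕ) = ((-1:ℂ)^(i:ℕ) * (-1)^(i:ℕ)) * P i i := by ring
      _ = P i i := by rw [key]; ring
  rw [hsq] at hentry
  linear_combination hentry / 2

open Real in
lemma trig_part (n_e n : ℕ) (hn : n = 2 * n_e) (i : ℕ) (hi1 : 1 ≤ i) (hi2 : i ≤ n) :
    (2 / ((n : ℝ) + 1)) *
      ∑ k ∈ Finset.Icc 1 n_e,
        Real.sin ((i : ℝ) * (k : ℝ) * Real.pi / ((n : ℝ) + 1)) ^ 2 = 1 / 2 := by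
  have hne1 : 1 ≤ n_e := by omega
  set α : ℝ := (i : ℝ) * Real.pi / ((n : ℝ) + 1) with hα
  have hnpos : (0 : ℝ) < (n : ℝ) + 1 := by positivity
  have hαpos : 0 < α := by
    apply div_pos _ hnpos
    have : (0:ℝ) < (i:ℝ) := by exact_mod_cast hi1
    positivity
  have hαlt : α < Real.pi := by
    rw [hα, div_lt_iff₀ hnpos]
    have hi : (i : ℝ) < (n : ℝ) + 1 := by exact_mod_cast Nat.lt_succ_of_le hi2
    have := Real.pi_pos
    nlinarith
  have hsin : Real.sin α ≠ 0 := ne_of_gt (Real.sin_pos_of_pos_of_lt_pi hαpos hαlt)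
  -- telescoping
  set F : ℕ → ℝ := fun j => Real.sin ((2 * (j:ℝ) + 1) * α) with hF
  have htel : ∑ k ∈ Finset.Icc 1 n_e, (2 * Real.sin α * Real.cos (2 * (k:ℝ) * α))
      = F n_e - F 0 := by
    rw [← Finset.sum_range_sub F n_e]
    rw [show Finset.Icc 1 n_e = Finset.Ico 1 (n_e+1) by rw [Finset.Ico_add_one_right_eq_Icc],
      Finset.sum_Ico_eq_sum_range]
    apply Finset.sum_congr (by norm_num)
    intro j _
    rw [hF]
    rw [Real.sin_sub_sin]
    push_cast
    ring_nf
  have hFn : F n_e = 0 := by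
    have : (2 * (n_e:ℝ) + 1) * α = (i:ℝ) * Real.pi := by
      rw [hα]
      field_simp
      rw [hn]
      push_cast
      ring
    show Real.sin ((2 * (n_e:ℝ) + 1) * α) = 0
    rw [this]
    exact Real.sin_nat_mul_pi i
  have hF0 : F 0 = Real.sin α := by show Real.sin ((2 * ((0:ℕ):ℝ) + 1) * α) = _; norm_num
  have hcos : ∑ k ∈ Finset.Icc 1 n_e, Real.cos (2 * (k:ℝ) * α) = -(1/2) := by
    have h2 : 2 * Real.sin α * ∑ k ∈ Finset.Icc 1 n_e, Real.cos (2 * (k:ℝ) * α)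
        = 2 * Real.sin α * (-(1/2)) := by
      rw [Finset.mul_sum, htel, hFn, hF0]
      ring
    exact mul_left_cancel₀ (by simp [hsin]) h2
  have hsum : ∑ k ∈ Finset.Icc 1 n_e,
      Real.sin ((i : ℝ) * (k : ℝ) * Real.pi / ((n : ℝ) + 1)) ^ 2 = ((n:ℝ) + 1) / 4 := by
    have hterm : ∀ k ∈ Finset.Icc 1 n_e,
        Real.sin ((i : ℝ) * (k : ℝ) * Real.pi / ((n : ℝ) + 1)) ^ 2
        = 1/2 - Real.cos (2 * (k:ℝ) * α) / 2 := by
      intro k _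
      rw [show (i : ℝ) * (k : ℝ) * Real.pi / ((n : ℝ) + 1) = (k:ℝ) * α by rw [hα]; ring,
        Real.sin_sq_eq_half_sub, show 2 * ((k:ℝ) * α) = 2 * (k:ℝ) * α by ring]
    rw [Finset.sum_congr rfl hterm, Finset.sum_sub_distrib, Finset.sum_const,
      Nat.card_Icc, ← Finset.sum_div, hcos]
    rw [hn]
    push_cast
    simp
    ring
  rw [hsum]
  field_simp
  norm_num

/-- Let `n = 2·n_e` be even, `H_n` the tridiagonal matrix with zero diagonal and `1/2` on
the sub- and super-diagonals, and `P_n` the spectral projector of `H_n` associated with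
`[−1,0)` (the projector onto the span of the eigenvectors for the `n_e` negative
eigenvalues). Then `[P_n]_{ii} = 1/2` for all `i`; equivalently,
`(2/(n+1))·Σ_{k=1}^{n/2} sin²(ikπ/(n+1)) = 1/2` for every `i = 1,…,n`. -/
theorem stmt_15 (n_e n : ℕ) (hn : n = 2 * n_e)
    (P : Matrix (Fin n) (Fin n) ℂ)
    (hP : P = ((trid_isHermitian n).eigenvectorUnitary : Matrix (Fin n) (Fin n) ℂ) *
        Matrix.diagonal
          (fun k : Fin n => if (trid_isHermitian n).eigenvalues k < 0 then (1 : ℂ) else 0) *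
        star ((trid_isHermitian n).eigenvectorUnitary : Matrix (Fin n) (Fin n) ℂ)) :
    (∀ i : Fin n, P i i = (1 / 2 : ℂ)) ∧
    (∀ i : ℕ, 1 ≤ i → i ≤ n →
      (2 / ((n : ℝ) + 1)) *
        ∑ k ∈ Finset.Icc 1 n_e,
          Real.sin ((i : ℝ) * (k : ℝ) * Real.pi / ((n : ℝ) + 1)) ^ 2 = 1 / 2) := by
  constructor
  · intro i
    rw [hP]
    exact proj_diag n_e n hn i
  · intro i h1 h2
    exact trig_part n_e n hn i h1 h2
end

section
/- Let n = 2·n_e be even and let H_n be the n×n tridiagonal matrix with zero diagonal entries and all sub- and super-diagonal entries equal to 1/2. Let P_n be the spectral projector of H_n associated with the interval [−1,0). Then [P_n]_{ij} = 0 whenever i − j is a nonzero even integer; that is, [P_n]_{i,i+2l} = 0 for all i and all integers l ≥ 1 with i + 2l ≤ n. Equivalently, for i ≠ j with i − j even, Σ_{k=1}^{n/2} [ cos((i+j)kπ/(n+1)) − cos((i−j)kπ/(n+1)) ] = 0. -/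
open Matrix


lemma sum_if_coe (n : ℕ) (c : ℤ) (X : ℂ) (hX : (0 ≤ c ∧ c < n) ∨ X = 0) :
    ∑ q : Fin n, (if (q : ℤ) = c then X else 0) = X := by
  rcases hX with ⟨h0, h1⟩ | rfl
  · have hc : c.toNat < n := by omega
    rw [Finset.sum_eq_single (⟨c.toNat, hc⟩ : Fin n)]
    · simp only [Fin.val_mk]; rw [if_pos (by omega)]
    · intro q _ hq
      rw [if_neg]
      intro h
      exact hq (by apply Fin.ext; simp only [Fin.val_mk]; omega)
    · simp
  · simp

lemma tri_sum (n : ℕ) (s : ℤ → ℂ) (h0 : s 0 = 0) (hn : s ((n : ℤ) + 1) = 0) (j : Fin n) :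
    ∑ q : Fin n, (if |(j : ℤ) - (q : ℤ)| = 1 then (1/2 : ℂ) else 0) * s ((q : ℤ) + 1)
      = (1/2) * (s (j : ℤ) + s ((j : ℤ) + 2)) := by
  have hj : (j : ℕ) < n := j.isLt
  have split : ∀ q : Fin n,
      (if |(j : ℤ) - (q : ℤ)| = 1 then (1/2 : ℂ) else 0) * s ((q : ℤ) + 1)
      = (if (q : ℤ) = (j : ℤ) - 1 then (1/2 : ℂ) * s (j : ℤ) else 0)
        + (if (q : ℤ) = (j : ℤ) + 1 then (1/2 : ℂ) * s ((j : ℤ) + 2) else 0) := by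
    intro q
    have habs : |(j:ℤ) - (q:ℤ)| = 1 ↔ ((q:ℤ) = (j:ℤ) - 1 ∨ (q:ℤ) = (j:ℤ) + 1) := by
      rw [abs_eq (by norm_num : (0:ℤ) ≤ 1)]; omega
    by_cases h1 : (q : ℤ) = (j : ℤ) - 1
    · rw [if_pos (habs.mpr (by omega)), if_pos h1,
        if_neg (show ¬((q:ℤ) = (j:ℤ) + 1) by omega), show (q:ℤ) + 1 = (j:ℤ) by omega]
      ring
    · by_cases h2 : (q : ℤ) = (j : ℤ) + 1
      · rw [if_pos (habs.mpr (by omega)), if_neg h1, if_pos h2,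
          show (q:ℤ) + 1 = (j:ℤ) + 2 by omega]
        ring
      · rw [if_neg (fun hc => by rcases habs.mp hc with h | h <;> omega), if_neg h1, if_neg h2,
          zero_mul, add_zero]
  have S1 : ∑ q : Fin n, (if (q : ℤ) = (j : ℤ) - 1 then (1/2 : ℂ) * s (j : ℤ) else 0)
      = (1/2 : ℂ) * s (j : ℤ) := by
    apply sum_if_coe
    rcases Nat.eq_zero_or_pos (j : ℕ) with hz | hpos
    · right
      rw [show ((j : ℕ) : ℤ) = 0 by omega, h0, mul_zero]
    · left; omega
  have S2 : ∑ q : Fin n, (if (q : ℤ) = (j : ℤ) + 1 then (1/2 : ℂ) * s ((j : ℤ) + 2) else 0)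
      = (1/2 : ℂ) * s ((j : ℤ) + 2) := by
    apply sum_if_coe
    rcases lt_or_ge ((j : ℕ) + 1) n with h | h
    · left; omega
    · right
      rw [show ((j : ℕ) : ℤ) + 2 = (n : ℤ) + 1 by omega, hn, mul_zero]
  rw [Finset.sum_congr rfl (fun q _ => split q), Finset.sum_add_distrib, S1, S2]
  ring

noncomputable def ang (n : ℕ) (t : Fin n) : ℝ := (((t : ℕ) : ℝ) + 1) * Real.pi / ((n : ℝ) + 1)

noncomputable def ceig (n : ℕ) (t : Fin n) : ℝ := Real.cos (ang n t)

noncomputable def evec (n : ℕ) (t : Fin n) : Fin n → ℂ :=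
  fun j => Complex.sin ((((j : ℕ) : ℂ) + 1) * ((ang n t : ℝ) : ℂ))

lemma trid_mulVec (n : ℕ) (t : Fin n) :
    trid n *ᵥ evec n t = ((ceig n t : ℝ) : ℂ) • evec n t := by
  funext j
  set θ : ℂ := ((ang n t : ℝ) : ℂ) with hθ
  have h0 : Complex.sin (((0 : ℤ) : ℂ) * θ) = 0 := by push_cast; simp
  have hn1 : Complex.sin ((((n : ℤ) + 1 : ℤ) : ℂ) * θ) = 0 := by
    have harg : ((((n : ℤ) + 1 : ℤ)) : ℂ) * θ = ((((((t : ℕ) + 1) : ℕ) : ℝ) * Real.pi : ℝ) : ℂ) := by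
      rw [hθ]; unfold ang
      have hne : ((n : ℂ) + 1) ≠ 0 := by
        have : (0:ℝ) < (n : ℝ) + 1 := by positivity
        intro h
        rw [show ((n:ℂ)+1) = (((n:ℝ)+1 : ℝ) : ℂ) by push_cast; ring] at h
        exact absurd (Complex.ofReal_eq_zero.mp h) (by linarith)
      push_cast
      rw [mul_comm, div_mul_eq_mul_div, mul_div_assoc, div_self hne, mul_one]
    rw [harg, ← Complex.ofReal_sin, Real.sin_nat_mul_pi, Complex.ofReal_zero]
  have key := tri_sum n (fun m => Complex.sin ((m : ℂ) * θ)) h0 hn1 j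
  have lhs_eq : (trid n *ᵥ evec n t) j
      = ∑ q : Fin n, (if |(j : ℤ) - (q : ℤ)| = 1 then (1/2 : ℂ) else 0)
          * Complex.sin ((((q : ℤ) + 1 : ℤ) : ℂ) * θ) := by
    simp only [Matrix.mulVec, dotProduct, trid, evec]
    apply Finset.sum_congr rfl
    intro q _
    have hc : (((q : ℤ) + 1 : ℤ) : ℂ) = ((q : ℕ) : ℂ) + 1 := by push_cast; ring
    rw [hc]
  rw [lhs_eq, key]
  have e1 : (((j : ℤ) : ℂ) * θ + (((j : ℤ) + 2 : ℤ) : ℂ) * θ) / 2 = (((j : ℕ) : ℂ) + 1) * θ := by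
    push_cast; ring
  have e2 : (((j : ℤ) : ℂ) * θ - (((j : ℤ) + 2 : ℤ) : ℂ) * θ) / 2 = -θ := by
    push_cast; ring
  rw [Complex.sin_add_sin, e1, e2, Complex.cos_neg]
  show _ = ((ceig n t : ℝ) : ℂ) * evec n t j
  unfold ceig evec
  rw [Complex.ofReal_cos]
  ring

lemma ang_mem (n : ℕ) (t : Fin n) : 0 < ang n t ∧ ang n t < Real.pi := by
  have hpi := Real.pi_pos
  have ht : (t : ℕ) < n := t.isLt
  unfold ang
  constructor
  · apply div_pos
    · positivity
    · positivity
  · rw [div_lt_iff₀ (by positivity)]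
    have h1 : ((t : ℕ) : ℝ) + 1 < (n : ℝ) + 1 := by
      have : ((t : ℕ) : ℝ) < (n : ℝ) := by exact_mod_cast ht
      linarith
    nlinarith

lemma ceig_injective (n : ℕ) : Function.Injective (ceig n) := by
  intro s t h
  have hs := ang_mem n s
  have ht := ang_mem n t
  unfold ceig at h
  have hang : ang n s = ang n t :=
    Real.injOn_cos ⟨le_of_lt hs.1, le_of_lt hs.2⟩ ⟨le_of_lt ht.1, le_of_lt ht.2⟩ h
  unfold ang at hang
  have hpi := Real.pi_ne_zero
  have hne : ((n : ℝ) + 1) ≠ 0 := by positivity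
  field_simp at hang
  exact Fin.ext (by have h' : ((s : ℕ) : ℝ) = ((t : ℕ) : ℝ) := by linarith
                    exact_mod_cast h')

lemma ceig_ne_zero (n_e n : ℕ) (hn : n = 2 * n_e) (t : Fin n) : ceig n t ≠ 0 := by
  intro h
  rcases Real.cos_eq_zero_iff.mp h with ⟨k, hk⟩
  unfold ang at hk
  have hpi := Real.pi_ne_zero
  have hne : ((n : ℝ) + 1) ≠ 0 := by positivity
  field_simp at hk
  have h2 : (((t : ℕ) : ℝ) + 1) * 2 * Real.pi = (2 * (k : ℝ) + 1) * ((n : ℝ) + 1) * Real.pi := by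
    linear_combination Real.pi * hk
  have h3 : (((t : ℕ) : ℝ) + 1) * 2 = (2 * (k : ℝ) + 1) * ((n : ℝ) + 1) :=
    mul_right_cancel₀ hpi h2
  have h4 : (((t : ℕ) : ℤ) + 1) * 2 = (2 * k + 1) * ((n : ℤ) + 1) := by exact_mod_cast h3
  have hodd : Odd ((2 * k + 1) * ((n : ℤ) + 1)) := by
    apply Odd.mul
    · exact odd_two_mul_add_one k
    · rw [hn]; push_cast; exact odd_two_mul_add_one (n_e : ℤ)
  rw [← h4] at hodd
  rcases hodd with ⟨m, hm⟩
  omega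

lemma ceig_rev (n : ℕ) (t : Fin n) : ceig n t.rev = - ceig n t := by
  have ht : (t : ℕ) < n := t.isLt
  have hrev : ((t.rev : ℕ) : ℝ) = (n : ℝ) - ((t : ℕ) : ℝ) - 1 := by
    rw [Fin.val_rev]
    have : (t : ℕ) + 1 ≤ n := ht
    push_cast [Nat.cast_sub this]
    ring
  unfold ceig
  rw [← Real.cos_pi_sub]
  congr 1
  unfold ang
  rw [hrev]
  have hne : ((n : ℝ) + 1) ≠ 0 := by positivity
  field_simp
  ring

lemma evec_ne_zero (n : ℕ) (t : Fin n) : evec n t ≠ 0 := by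
  intro h
  have hpos : 0 < n := t.pos
  have h0 := congrFun h (⟨0, hpos⟩ : Fin n)
  unfold evec at h0
  simp only [Fin.val_mk, Nat.cast_zero, zero_add, one_mul, Pi.zero_apply] at h0
  rw [← Complex.ofReal_sin, Complex.ofReal_eq_zero] at h0
  have := ang_mem n t
  exact absurd h0 (ne_of_gt (Real.sin_pos_of_pos_of_lt_pi this.1 this.2))

open Polynomial in
lemma aeval_prod_trid (n : ℕ) :
    Polynomial.aeval (trid n) (∏ t : Fin n, (X - C ((ceig n t : ℝ) : ℂ))) = 0 := by
  rcases Nat.eq_zero_or_pos n with rfl | hpos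
  · exact Subsingleton.elim _ _
  have : Nonempty (Fin n) := ⟨⟨0, hpos⟩⟩
  set A := trid n with hA
  set q : ℂ[X] := ∏ t : Fin n, (X - C ((ceig n t : ℝ) : ℂ)) with hq
  set M := Polynomial.aeval A q with hM
  have heig : ∀ t : Fin n,
      Module.End.HasEigenvector (Matrix.mulVecLin A) ((ceig n t : ℝ) : ℂ) (evec n t) := by
    intro t
    refine ⟨?_, evec_ne_zero n t⟩
    rw [Module.End.mem_eigenspace_iff, Matrix.mulVecLin_apply, trid_mulVec]
  have hinj : Function.Injective (fun t : Fin n => ((ceig n t : ℝ) : ℂ)) := by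
    intro s t h
    exact ceig_injective n (Complex.ofReal_injective h)
  have hli : LinearIndependent ℂ (evec n) :=
    Module.End.eigenvectors_linearIndependent' (Matrix.mulVecLin A) _ hinj _ heig
  have hsp : Submodule.span ℂ (Set.range (evec n)) = ⊤ :=
    hli.span_eq_top_of_card_eq_finrank
      (by rw [Module.finrank_fintype_fun_eq_card, Fintype.card_fin])
  have hkill : ∀ t : Fin n, M *ᵥ evec n t = 0 := by
    intro t
    have hfac : q = (∏ u ∈ Finset.univ.erase t, (X - C ((ceig n u : ℝ) : ℂ)))
        * (X - C ((ceig n t : ℝ) : ℂ)) := by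
      rw [hq, Finset.prod_erase_mul _ _ (Finset.mem_univ t)]
    have : M = Polynomial.aeval A (∏ u ∈ Finset.univ.erase t, (X - C ((ceig n u : ℝ) : ℂ)))
        * (A - ((ceig n t : ℝ) : ℂ) • 1) := by
      rw [hM, hfac, _root_.map_mul, map_sub, Polynomial.aeval_X, Polynomial.aeval_C,
        Algebra.algebraMap_eq_smul_one]
    rw [this, ← Matrix.mulVec_mulVec]
    have hz : (A - ((ceig n t : ℝ) : ℂ) • 1) *ᵥ evec n t = 0 := by
      rw [Matrix.sub_mulVec, trid_mulVec, Matrix.smul_mulVec, Matrix.one_mulVec, sub_self]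
    rw [hz, Matrix.mulVec_zero]
  have hlin : M.mulVecLin = 0 := by
    apply LinearMap.ext_on hsp
    rintro x ⟨t, rfl⟩
    simpa using hkill t
  ext i j
  have h2 := LinearMap.congr_fun hlin (Pi.single j 1)
  have h3 := congrFun h2 i
  simpa [Matrix.mulVecLin_apply, Matrix.mulVec_single] using h3

noncomputable def conjAlgHom (n : ℕ) (U : Matrix (Fin n) (Fin n) ℂ)
    (h1 : U * star U = 1) (h2 : star U * U = 1) :
    Matrix (Fin n) (Fin n) ℂ →ₐ[ℂ] Matrix (Fin n) (Fin n) ℂ where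
  toFun := fun x => U * x * star U
  map_one' := by show U * 1 * star U = 1; rw [Matrix.mul_one, h1]
  map_mul' := fun x y => by
    show U * (x * y) * star U = (U * x * star U) * (U * y * star U)
    simp only [Matrix.mul_assoc]
    rw [← Matrix.mul_assoc (star U) U (y * star U), h2, Matrix.one_mul]
  map_zero' := by show U * 0 * star U = 0; simp
  map_add' := fun x y => by
    show U * (x + y) * star U = U * x * star U + U * y * star U
    rw [Matrix.mul_add, Matrix.add_mul]
  commutes' := fun c => by
    show U * (algebraMap ℂ _ c) * star U = algebraMap ℂ _ c
    simp only [Algebra.algebraMap_eq_smul_one]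
    rw [Matrix.mul_smul, Matrix.mul_one, Matrix.smul_mul, h1]

open Polynomial in
lemma aeval_trid_eq (n : ℕ) (p : ℂ[X]) :
    Polynomial.aeval (trid n) p
      = ((trid_isHermitian n).eigenvectorUnitary : Matrix (Fin n) (Fin n) ℂ)
        * Matrix.diagonal (fun k => p.eval (((trid_isHermitian n).eigenvalues k : ℂ)))
        * star ((trid_isHermitian n).eigenvectorUnitary : Matrix (Fin n) (Fin n) ℂ) := by
  have hA := trid_isHermitian n
  set U : Matrix (Fin n) (Fin n) ℂ := (hA.eigenvectorUnitary : Matrix (Fin n) (Fin n) ℂ) with hU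
  have h1 : U * star U = 1 := (Matrix.mem_unitaryGroup_iff).mp (hA.eigenvectorUnitary).2
  have h2 : star U * U = 1 := (Matrix.mem_unitaryGroup_iff').mp (hA.eigenvectorUnitary).2
  set φ := conjAlgHom n U h1 h2 with hφ
  have hspec : trid n = φ (Matrix.diagonal (RCLike.ofReal ∘ hA.eigenvalues)) := by
    exact hA.spectral_theorem
  have hdiag : ∀ d : Fin n → ℂ, Polynomial.aeval (Matrix.diagonal d) p
      = Matrix.diagonal (fun k => p.eval (d k)) := by
    intro d
    have h3 := Polynomial.aeval_algHom_apply (Matrix.diagonalAlgHom (n := Fin n) (α := ℂ) ℂ) d p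
    simp only [Matrix.diagonalAlgHom_apply] at h3
    rw [h3]
    have hfun : (Polynomial.aeval d) p = fun k => p.eval (d k) := by
      funext k
      have h4 := Polynomial.aeval_algHom_apply (Pi.evalAlgHom ℂ (fun _ : Fin n => ℂ) k) d p
      simp only [Pi.evalAlgHom_apply] at h4
      rw [← h4, Polynomial.aeval_def, Polynomial.eval, Algebra.algebraMap_self]
    rw [hfun]
  conv_lhs => rw [hspec]
  rw [Polynomial.aeval_algHom_apply φ _ p, hdiag]
  show U * _ * star U = U * _ * star U
  rfl

open Polynomial in
lemma eig_mem (n : ℕ) (k : Fin n) : ∃ t : Fin n, (trid_isHermitian n).eigenvalues k = ceig n t := by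
  have hA := trid_isHermitian n
  set U : Matrix (Fin n) (Fin n) ℂ := ((trid_isHermitian n).eigenvectorUnitary : Matrix (Fin n) (Fin n) ℂ) with hU
  have h1 : U * star U = 1 := (Matrix.mem_unitaryGroup_iff).mp ((trid_isHermitian n).eigenvectorUnitary).2
  have h2 : star U * U = 1 := (Matrix.mem_unitaryGroup_iff').mp ((trid_isHermitian n).eigenvectorUnitary).2
  set q : ℂ[X] := ∏ t : Fin n, (X - C ((ceig n t : ℝ) : ℂ)) with hq
  have h0 : U * Matrix.diagonal
      (fun k => q.eval (((trid_isHermitian n).eigenvalues k : ℂ))) * star U = 0 := by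
    rw [← aeval_trid_eq, aeval_prod_trid]
  have hD : Matrix.diagonal
      (fun k => q.eval (((trid_isHermitian n).eigenvalues k : ℂ))) = 0 := by
    have := congrArg (fun M => star U * M * U) h0
    simp only [Matrix.mul_assoc] at this
    rw [h2, Matrix.mul_one, ← Matrix.mul_assoc, h2, Matrix.one_mul, Matrix.zero_mul,
      Matrix.mul_zero] at this
    exact this
  have hent := congrFun (congrFun hD k) k
  rw [Matrix.diagonal_apply_eq] at hent
  rw [hq, Polynomial.eval_prod] at hent
  simp only [Polynomial.eval_sub, Polynomial.eval_X, Polynomial.eval_C] at hent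
  rcases Finset.prod_eq_zero_iff.mp hent with ⟨t, _, ht⟩
  refine ⟨t, ?_⟩
  have : (((trid_isHermitian n).eigenvalues k : ℝ) : ℂ) = ((ceig n t : ℝ) : ℂ) := by
    linear_combination ht
  exact_mod_cast this

lemma trid_pow_parity (n : ℕ) (m : ℕ) (i j : Fin n)
    (h : ¬ Even ((m : ℤ) + (i : ℤ) - (j : ℤ))) : ((trid n) ^ m) i j = 0 := by
  induction m generalizing i j with
  | zero =>
    have hij : i ≠ j := by
      intro hij
      subst hij
      exact h (by simp)
    rw [pow_zero]
    exact Matrix.one_apply_ne hij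
  | succ m ih =>
    rw [pow_succ, Matrix.mul_apply]
    apply Finset.sum_eq_zero
    intro q _
    by_cases hq : |(q : ℤ) - (j : ℤ)| = 1
    · have hpar : ¬ Even ((m : ℤ) + (i : ℤ) - (q : ℤ)) := by
        intro he
        apply h
        rcases abs_eq (by norm_num : (0:ℤ) ≤ 1) |>.mp hq with h' | h' <;>
          (rw [Int.even_iff] at he ⊢; push_cast; push_cast at he; omega)
      rw [ih i q hpar, zero_mul]
    · have : trid n q j = 0 := if_neg hq
      rw [this, mul_zero]

open Real in
lemma cos_sum_eq (n_e : ℕ) (m : ℤ) (hme : Even m) (hm0 : m ≠ 0)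
    (hmlt : |m| < 2 * (2 * n_e + 1)) :
    ∑ k ∈ Finset.Icc 1 n_e, Real.cos ((m : ℝ) * (k : ℝ) * π / ((2 * n_e : ℝ) + 1)) = -1/2 := by
  set a : ℝ := (m : ℝ) * π / (2 * ((2 * n_e : ℝ) + 1)) with ha
  set f : ℕ → ℝ := fun k => Real.cos ((m : ℝ) * (k : ℝ) * π / ((2 * n_e : ℝ) + 1)) with hf
  have hpi := Real.pi_ne_zero
  have hD : ((2 * n_e : ℝ) + 1) ≠ 0 := by positivity
  have hsa : Real.sin a ≠ 0 := by
    intro h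
    rcases Real.sin_eq_zero_iff.mp h with ⟨k, hk⟩
    rw [ha] at hk
    have h1 : (k : ℝ) * (2 * ((2 * n_e : ℝ) + 1)) * π = (m : ℝ) * π := by
      field_simp at hk; linear_combination π * hk
    have h2 : (k : ℝ) * (2 * ((2 * n_e : ℝ) + 1)) = (m : ℝ) :=
      mul_right_cancel₀ hpi h1
    have h3 : k * (2 * (2 * (n_e:ℤ) + 1)) = m := by exact_mod_cast h2
    have hdvd : (2 * (2 * (n_e:ℤ) + 1)) ∣ |m| := (dvd_abs _ _).mpr ⟨k, by linarith [h3]⟩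
    have := Int.le_of_dvd (abs_pos.mpr hm0) hdvd
    omega
  have key : ∀ k : ℕ, 2 * Real.sin a * f (k+1)
      = Real.sin ((2 * ((k:ℝ)+1) + 1) * a) - Real.sin ((2 * (k:ℝ) + 1) * a) := by
    intro k
    rw [Real.sin_sub_sin]
    have e1 : ((2 * ((k:ℝ)+1) + 1) * a - (2 * (k:ℝ) + 1) * a) / 2 = a := by ring
    have e2 : ((2 * ((k:ℝ)+1) + 1) * a + (2 * (k:ℝ) + 1) * a) / 2
        = (m : ℝ) * ((k+1 : ℕ) : ℝ) * π / ((2 * n_e : ℝ) + 1) := by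
      rw [ha]; push_cast; field_simp; try ring
    rw [e1, e2, hf]; try ring
  have tele : ∑ k ∈ Finset.range n_e,
      (Real.sin ((2 * ((k:ℝ)+1) + 1) * a) - Real.sin ((2 * (k:ℝ) + 1) * a))
      = Real.sin ((2 * (n_e:ℝ) + 1) * a) - Real.sin a := by
    have := Finset.sum_range_sub (fun k : ℕ => Real.sin ((2 * (k:ℝ) + 1) * a)) n_e
    convert this using 2 with k
    · push_cast; ring_nf
    · norm_num
  have hend : Real.sin ((2 * (n_e:ℝ) + 1) * a) = 0 := by
    obtain ⟨t, rfl⟩ := hme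
    have : (2 * (n_e:ℝ) + 1) * a = (t : ℝ) * π := by
      rw [ha]; push_cast; field_simp; ring
    rw [this]; exact Real.sin_int_mul_pi t
  have hsum : ∑ k ∈ Finset.Icc 1 n_e, f k = ∑ k ∈ Finset.range n_e, f (k+1) := by
    rw [← Finset.Ico_add_one_right_eq_Icc, Finset.sum_Ico_eq_sum_range]
    simp [Nat.add_comm]
  have main : 2 * Real.sin a * ∑ k ∈ Finset.Icc 1 n_e, f k = 2 * Real.sin a * (-1/2) := by
    rw [hsum, Finset.mul_sum, Finset.sum_congr rfl (fun k _ => key k), tele, hend]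
    ring
  have h2 : (2 : ℝ) * Real.sin a ≠ 0 := by
    intro h; apply hsa; linarith [h]
  exact mul_left_cancel₀ h2 main


/-- Let `n = 2·n_e` be even, `H_n` the tridiagonal matrix with zero diagonal and `1/2` on
the sub- and super-diagonals, and `P_n` the spectral projector of `H_n` associated with
`[−1,0)`. Then `[P_n]_{ij} = 0` whenever `i − j` is a nonzero even integer; equivalently,
for `i ≠ j` (`1`-based) with `i − j` even,
`Σ_{k=1}^{n/2} [cos((i+j)kπ/(n+1)) − cos((i−j)kπ/(n+1))] = 0`. -/
theorem stmt_16 (n_e n : ℕ) (hn : n = 2 * n_e)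
    (P : Matrix (Fin n) (Fin n) ℂ)
    (hP : P = ((trid_isHermitian n).eigenvectorUnitary : Matrix (Fin n) (Fin n) ℂ) *
        Matrix.diagonal
          (fun k : Fin n => if (trid_isHermitian n).eigenvalues k < 0 then (1 : ℂ) else 0) *
        star ((trid_isHermitian n).eigenvectorUnitary : Matrix (Fin n) (Fin n) ℂ)) :
    (∀ i j : Fin n, i ≠ j → Even ((i : ℤ) - (j : ℤ)) → P i j = 0) ∧
    (∀ i j : ℕ, 1 ≤ i → i ≤ n → 1 ≤ j → j ≤ n → i ≠ j → Even ((i : ℤ) - (j : ℤ)) →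
      ∑ k ∈ Finset.Icc 1 n_e,
        (Real.cos (((i : ℝ) + (j : ℝ)) * (k : ℝ) * Real.pi / ((n : ℝ) + 1)) -
         Real.cos (((i : ℝ) - (j : ℝ)) * (k : ℝ) * Real.pi / ((n : ℝ) + 1))) = 0) := by
  constructor
  · intro i j hij heven
    have hpos : 0 < n := i.pos
    classical
    set A := trid n with hA
    set node : Fin n → ℂ := fun t => ((ceig n t : ℝ) : ℂ) with hnode
    have hnodeinj : Function.Injective node := by
      intro s t h
      exact ceig_injective n (Complex.ofReal_injective h)
    have hinjOn : Set.InjOn node (Finset.univ : Finset (Fin n)) := fun a _ b _ h => hnodeinj h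
    set val : Fin n → ℂ := fun t => if ceig n t < 0 then 1 else 0 with hval
    set p : Polynomial ℂ := Lagrange.interpolate Finset.univ node val with hp
    have heval : ∀ t : Fin n, p.eval (node t) = val t := fun t =>
      Lagrange.eval_interpolate_at_node val hinjOn (Finset.mem_univ t)
    have hdiageq : (fun k : Fin n => if (trid_isHermitian n).eigenvalues k < 0 then (1:ℂ) else 0)
        = fun k => p.eval ((((trid_isHermitian n).eigenvalues k : ℝ) : ℂ)) := by
      funext k
      obtain ⟨t, ht⟩ := eig_mem n k
      rw [ht]
      show val t = p.eval (node t)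
      exact (heval t).symm
    have hPp : P = Polynomial.aeval A p := by
      rw [hP, hdiageq]
      exact (aeval_trid_eq n p).symm
    -- the symmetry identity
    have hdp : p.natDegree < n := by
      by_cases hp0 : p = 0
      · rw [hp0]; simpa using hpos
      · rw [Polynomial.natDegree_lt_iff_degree_lt hp0]
        have := Lagrange.degree_interpolate_lt (r := val) hinjOn
        rw [← hp] at this
        simpa using this
    set r : Polynomial ℂ := p + p.comp (- Polynomial.X) - 1 with hr
    have hrz : r = 0 := by
      apply Polynomial.eq_zero_of_natDegree_lt_card_of_eval_eq_zero r hnodeinj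
      · intro t
        have hcomp : (p.comp (- Polynomial.X)).eval (node t) = p.eval (node t.rev) := by
          rw [Polynomial.eval_comp]
          congr 1
          simp only [Polynomial.eval_neg, Polynomial.eval_X, hnode]
          rw [ceig_rev]
          push_cast
          ring
        rw [hr]
        simp only [Polynomial.eval_sub, Polynomial.eval_add, Polynomial.eval_one, hcomp,
          heval t, heval t.rev]
        have hzero := ceig_ne_zero n_e n hn t
        have hrev : ceig n t.rev = - ceig n t := ceig_rev n t
        rw [hval]
        simp only [hrev]
        by_cases hlt : ceig n t < 0
        · rw [if_pos hlt, if_neg (not_lt.mpr (by linarith))]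
          ring
        · have hgt : 0 < ceig n t := by
            rcases lt_or_eq_of_le (not_lt.mp hlt) with h | h
            · exact h
            · exact absurd h.symm hzero
          rw [if_neg hlt, if_pos (by linarith)]
          ring
      · have hb1 : (p.comp (- Polynomial.X)).natDegree ≤ p.natDegree := by
          calc (p.comp (- Polynomial.X)).natDegree
              ≤ p.natDegree * (- Polynomial.X : Polynomial ℂ).natDegree :=
                Polynomial.natDegree_comp_le
            _ ≤ p.natDegree * 1 := by
                apply Nat.mul_le_mul_left
                rw [Polynomial.natDegree_neg, Polynomial.natDegree_X]
            _ = p.natDegree := by ring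
        have hb2 : r.natDegree ≤ p.natDegree := by
          rw [hr]
          refine le_trans (Polynomial.natDegree_sub_le _ _) ?_
          simp only [Polynomial.natDegree_one]
          refine max_le (le_trans (Polynomial.natDegree_add_le _ _) ?_) (by omega)
          exact max_le le_rfl hb1
        calc r.natDegree ≤ p.natDegree := hb2
          _ < n := hdp
          _ = Fintype.card (Fin n) := (Fintype.card_fin n).symm
    have hone : Polynomial.aeval A p + Polynomial.aeval A (p.comp (- Polynomial.X)) = 1 := by
      have := congrArg (Polynomial.aeval A) hrz
      rw [hr] at this
      simp only [map_sub, map_add, _root_.map_one, _root_.map_zero] at this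
      rw [sub_eq_zero] at this
      exact this
    have hcompA : Polynomial.aeval A (p.comp (- Polynomial.X)) = Polynomial.aeval (-A) p := by
      rw [Polynomial.aeval_comp]
      congr 1
      simp
    -- entrywise equality for even differences
    have hent : (Polynomial.aeval (-A) p) i j = (Polynomial.aeval A p) i j := by
      rw [Polynomial.aeval_eq_sum_range (x := -A), Polynomial.aeval_eq_sum_range (x := A)]
      rw [Matrix.sum_apply, Matrix.sum_apply]
      apply Finset.sum_congr rfl
      intro m _
      rcases Nat.even_or_odd m with hm | hm
      · rw [hm.neg_pow]
      · have hz : (A ^ m) i j = 0 := by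
          apply trid_pow_parity
          intro he
          rcases heven with ⟨c, hc⟩
          rcases hm with ⟨d, hd⟩
          rw [Int.even_iff] at he
          omega
        rw [hm.neg_pow]
        simp [Matrix.smul_apply, hz]
    have h1ij : (1 : Matrix (Fin n) (Fin n) ℂ) i j = 0 := Matrix.one_apply_ne hij
    rw [hcompA] at hone
    have hfin : (Polynomial.aeval A p) i j + (Polynomial.aeval (-A) p) i j
        = (1 : Matrix (Fin n) (Fin n) ℂ) i j := by
      rw [← Matrix.add_apply, hone]
    rw [hent, h1ij] at hfin
    have hPij : P i j = (Polynomial.aeval A p) i j := congrFun (congrFun hPp i) j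
    rw [hPij]
    linear_combination hfin / 2
  · intro i j h1i hin h1j hjn hij heven
    have hn1 : ((n : ℝ) + 1) = 2 * (n_e : ℝ) + 1 := by rw [hn]; push_cast; ring
    rw [Finset.sum_sub_distrib]
    have e1 : ∑ k ∈ Finset.Icc 1 n_e,
        Real.cos (((i : ℝ) + (j : ℝ)) * (k : ℝ) * Real.pi / ((n : ℝ) + 1)) = -1/2 := by
      have := cos_sum_eq n_e ((i : ℤ) + (j : ℤ)) ?_ ?_ ?_
      · rw [← this]
        apply Finset.sum_congr rfl
        intro k _
        rw [hn1]
        push_cast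
        ring_nf
      · rw [Int.even_iff] at heven ⊢; omega
      · omega
      · rw [hn] at hin hjn; rw [abs_lt]; constructor <;> omega
    have e2 : ∑ k ∈ Finset.Icc 1 n_e,
        Real.cos (((i : ℝ) - (j : ℝ)) * (k : ℝ) * Real.pi / ((n : ℝ) + 1)) = -1/2 := by
      have := cos_sum_eq n_e ((i : ℤ) - (j : ℤ)) heven ?_ ?_
      · rw [← this]
        apply Finset.sum_congr rfl
        intro k _
        rw [hn1]
        push_cast
        ring_nf
      · omega
      · rw [hn] at hin hjn; rw [abs_lt]; constructor <;> omega
    rw [e1, e2]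
    ring
end
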